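/- arXiv:2106.01886 — 3 statements merged into one kernel-verified Lean document; each statement's English description precedes it below -/
import Mathlib

section
/- Let N be a finite group having a unique minimal normal subgroup S, and suppose that the centralizer C_N(S) is trivial. Then for every nontrivial normal subgroup H of N, the socle of H equals S, i.e. soc(H) = S = soc(N). -/
/-- A minimal normal subgroup: a nontrivial normal subgroup all of whose proper
normal (in the ambient group) subgroups contained in it are trivial. -/
def IsMinimalNormal {G : Type*} [Group G] (M : Subgroup G) : Prop :=
  M.Normal ∧ M ≠ ⊥ ∧ ∀ K : Subgroup G, K.Normal → K ≤ M → K = ⊥ ∨ K = M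

/-- The socle of a group: the subgroup generated by (i.e. the supremum of) all
minimal normal subgroups. -/
def socle (G : Type*) [Group G] : Subgroup G :=
  sSup {M : Subgroup G | IsMinimalNormal M}

/-- In a finite group, every nontrivial normal subgroup contains a minimal
normal subgroup. -/
lemma exists_isMinimalNormal_le {G : Type*} [Group G] [Finite G]
    (H : Subgroup G) (hn : H.Normal) (hH : H ≠ ⊥) :
    ∃ M : Subgroup G, IsMinimalNormal M ∧ M ≤ H := by
  have : Finite (Subgroup G) :=
    Finite.of_injective (fun K : Subgroup G => (K : Set G)) SetLike.coe_injective
  obtain ⟨M, ⟨hMn, hMne, hMle⟩, hmin⟩ :=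
    (Finite.to_wellFoundedLT (α := Subgroup G)).wf.has_min
      {K : Subgroup G | K.Normal ∧ K ≠ ⊥ ∧ K ≤ H} ⟨H, hn, hH, le_rfl⟩
  refine ⟨M, ⟨hMn, hMne, ?_⟩, hMle⟩
  intro K hKn hKM
  by_cases h : K = ⊥
  · exact Or.inl h
  · right
    by_contra hne
    exact hmin K ⟨hKn, h, hKM.trans hMle⟩ (lt_of_le_of_ne hKM hne)

lemma map_map_symm_eq {G G' : Type*} [Group G] [Group G'] (e : G ≃* G') (K : Subgroup G') :
    (K.map e.symm.toMonoidHom).map e.toMonoidHom = K := by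
  ext x
  simp [Subgroup.mem_map_equiv]

lemma map_symm_map_eq {G G' : Type*} [Group G] [Group G'] (e : G ≃* G') (K : Subgroup G) :
    (K.map e.toMonoidHom).map e.symm.toMonoidHom = K := by
  ext x
  simp [Subgroup.mem_map_equiv]

lemma IsMinimalNormal.map_equiv {G G' : Type*} [Group G] [Group G'] (e : G ≃* G')
    {M : Subgroup G} (h : IsMinimalNormal M) :
    IsMinimalNormal (M.map e.toMonoidHom) := by
  obtain ⟨hn, hne, hmin⟩ := h
  refine ⟨hn.map _ e.surjective, ?_, ?_⟩
  · intro hb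
    apply hne
    rw [← Subgroup.map_bot e.toMonoidHom] at hb
    exact Subgroup.map_injective e.injective hb
  · intro K hKn hKle
    have h1 : (K.map e.symm.toMonoidHom).Normal := hKn.map _ e.symm.surjective
    have h2 : K.map e.symm.toMonoidHom ≤ M := by
      have := Subgroup.map_mono (f := e.symm.toMonoidHom) hKle
      rwa [map_symm_map_eq] at this
    rcases hmin _ h1 h2 with h | h
    · left
      have := congrArg (Subgroup.map e.toMonoidHom) h
      rwa [map_map_symm_eq, Subgroup.map_bot] at this
    · right
      have := congrArg (Subgroup.map e.toMonoidHom) h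
      rwa [map_map_symm_eq] at this

lemma socle_map_equiv_le {G G' : Type*} [Group G] [Group G'] (e : G ≃* G') :
    (socle G).map e.toMonoidHom ≤ socle G' := by
  rw [socle, (Subgroup.gc_map_comap e.toMonoidHom).l_sSup]
  exact iSup₂_le fun M hM => le_sSup (hM.map_equiv e)

lemma socle_map_equiv {G G' : Type*} [Group G] [Group G'] (e : G ≃* G') :
    (socle G).map e.toMonoidHom = socle G' := by
  refine le_antisymm (socle_map_equiv_le e) ?_
  have h := Subgroup.map_mono (f := e.toMonoidHom) (socle_map_equiv_le e.symm)
  rwa [map_map_symm_eq] at h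

lemma socle_map_subtype_normal {G : Type*} [Group G] (H : Subgroup G) [H.Normal] :
    ((socle ↥H).map H.subtype).Normal := by
  constructor
  intro n hn g
  obtain ⟨m, hm, rfl⟩ := hn
  have hm' : MulAut.conjNormal (H := H) g m ∈ socle ↥H := by
    have := socle_map_equiv (G := ↥H) (G' := ↥H) (MulAut.conjNormal (H := H) g)
    rw [← this]
    exact ⟨m, hm, rfl⟩
  refine ⟨_, hm', ?_⟩
  simp [Subgroup.coe_subtype, MulAut.conjNormal_apply]

/-- If a finite group `N` has a unique minimal normal subgroup `S` whose centralizer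
in `N` is trivial, then every nontrivial normal subgroup `H` of `N` satisfies
`soc(H) = S = soc(N)`. -/
theorem socle_eq_of_uniqueMinimalNormal {N : Type*} [Group N] [Finite N]
    (S : Subgroup N) (hS : IsMinimalNormal S)
    (huniq : ∀ M : Subgroup N, IsMinimalNormal M → M = S)
    (hcent : Subgroup.centralizer (S : Set N) = ⊥)
    (H : Subgroup N) [H.Normal] (hH : H ≠ ⊥) :
    Subgroup.map H.subtype (socle ↥H) = S ∧ S = socle N := by
  -- S ≤ H
  obtain ⟨M₀, hM₀, hM₀le⟩ := exists_isMinimalNormal_le H ‹H.Normal› hH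
  have hSH : S ≤ H := (huniq M₀ hM₀) ▸ hM₀le
  -- second part: socle N = S
  have hsoc : S = socle N := by
    refine le_antisymm (le_sSup hS) (sSup_le fun M hM => (huniq M hM).le)
  refine ⟨?_, hsoc⟩
  set T := Subgroup.map H.subtype (socle ↥H) with hT
  have hTnormal : T.Normal := socle_map_subtype_normal H
  -- T ≤ S
  have hTS : T ≤ S := by
    rw [hT, socle, (Subgroup.gc_map_comap H.subtype).l_sSup]
    refine iSup₂_le fun M hM => ?_
    obtain ⟨hMn, hMne, hMmin⟩ := hM
    have hS'n : (S.subgroupOf H).Normal := hS.1.subgroupOf H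
    have hint : M ⊓ S.subgroupOf H = ⊥ ∨ M ⊓ S.subgroupOf H = M := by
      refine hMmin _ ?_ inf_le_left
      exact @Subgroup.normal_inf_normal _ _ M (S.subgroupOf H) hMn hS'n
    rcases hint with h | h
    · -- commutator trivial, contradiction
      exfalso
      have hcomm : ⁅M, S.subgroupOf H⁆ = ⊥ :=
        le_bot_iff.mp (h ▸ Subgroup.commutator_le_inf M (S.subgroupOf H))
      have hcen : M ≤ Subgroup.centralizer (S.subgroupOf H : Set ↥H) :=
        Subgroup.commutator_eq_bot_iff_le_centralizer.mp hcomm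
      apply hMne
      rw [eq_bot_iff]
      intro m hm
      have : (m : N) ∈ Subgroup.centralizer (S : Set N) := by
        rw [Subgroup.mem_centralizer_iff]
        intro s hs
        have hsH : s ∈ H := hSH hs
        have := hcen hm ⟨s, hsH⟩ (by simpa [Subgroup.mem_subgroupOf] using hs)
        exact congrArg Subtype.val this
      rw [hcent, Subgroup.mem_bot] at this
      rw [Subgroup.mem_bot]
      exact Subtype.ext (by simpa using this)
    · have hMle : M ≤ S.subgroupOf H := h.symm.le.trans inf_le_right
      calc Subgroup.map H.subtype M ≤ Subgroup.map H.subtype (S.subgroupOf H) :=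
            Subgroup.map_mono hMle
        _ = S ⊓ H := Subgroup.subgroupOf_map_subtype S H
        _ ≤ S := inf_le_left
  -- T ≠ ⊥
  have hTne : T ≠ ⊥ := by
    have : Nontrivial ↥H := (Subgroup.nontrivial_iff_ne_bot H).mpr hH
    obtain ⟨M, hM, -⟩ := exists_isMinimalNormal_le (⊤ : Subgroup ↥H)
      inferInstance bot_ne_top.symm
    intro hbot
    apply hM.2.1
    have hMT : Subgroup.map H.subtype M ≤ T := Subgroup.map_mono (le_sSup hM)
    rw [hbot, le_bot_iff] at hMT
    exact (Subgroup.map_eq_bot_iff_of_injective M (Subgroup.subtype_injective H)).mp hMT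
  -- S ≤ T
  obtain ⟨M₁, hM₁, hM₁le⟩ := exists_isMinimalNormal_le T hTnormal hTne
  have hST : S ≤ T := (huniq M₁ hM₁) ▸ hM₁le
  exact le_antisymm hTS hST
end

section
/- Let m ≥ 5 and k ≥ 1 with 2k < m. Then the normalizer of A_m^{(k)} in the full symmetric group Sym(Ω_{m,k}) is exactly S_m^{(k)}; that is, N_{Sym(Ω_{m,k})}(φ_{m,k}(Alt(m))) = φ_{m,k}(Sym(m)). -/
open Pointwise

/-- `Ω_{m,k}`: the set of `k`-element subsets of an `m`-element set. -/
abbrev KSubsets (m k : ℕ) := {A : Finset (Fin m) // A.card = k}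

/-- The natural action of `Sym(m)` on `k`-element subsets, `g • A = {g a : a ∈ A}`. -/
instance ksubsetsAction (m k : ℕ) : MulAction (Equiv.Perm (Fin m)) (KSubsets m k) where
  smul g A := ⟨g • A.1, by rw [Finset.card_smul_finset]; exact A.2⟩
  one_smul A := by ext1; exact one_smul _ _
  mul_smul g h A := by ext1; exact mul_smul g h A.1

/-- `φ_{m,k} : Sym(m) → Sym(Ω_{m,k})`, the homomorphism induced by the natural action. -/
def ksubsetsHom (m k : ℕ) : Equiv.Perm (Fin m) →* Equiv.Perm (KSubsets m k) :=
  MulAction.toPermHom _ _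

open Finset Equiv

theorem Equiv.Perm.inv_apply_self {α : Type*} (f : Equiv.Perm α) (x : α) : f⁻¹ (f x) = x :=
  Equiv.symm_apply_apply f x

theorem Equiv.Perm.apply_inv_self {α : Type*} (f : Equiv.Perm α) (x : α) : f (f⁻¹ x) = x :=
  Equiv.apply_symm_apply f x

variable {m : ℕ}

/-- Given two pairs of finsets with matching "Venn diagram" cardinalities, there is a
permutation mapping the first pair onto the second. -/
lemma exists_perm_pair (B C B' C' : Finset (Fin m))
    (h1 : (B ∩ C).card = (B' ∩ C').card) (h2 : (B \ C).card = (B' \ C').card)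
    (h3 : (C \ B).card = (C' \ B').card) :
    ∃ g : Equiv.Perm (Fin m), (∀ x, (g x ∈ B' ↔ x ∈ B) ∧ (g x ∈ C' ↔ x ∈ C)) := by
  classical
  set c : Fin m → Bool × Bool := fun x => ((x ∈ B : Bool), (x ∈ C : Bool)) with hc
  set c' : Fin m → Bool × Bool := fun x => ((x ∈ B' : Bool), (x ∈ C' : Bool)) with hc'
  have filt : ∀ (D E : Finset (Fin m)) (i : Bool × Bool),
      (Finset.univ.filter (fun x => ((x ∈ D : Bool), (x ∈ E : Bool)) = i)).card
        = (match i with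
          | (true, true) => (D ∩ E).card
          | (true, false) => (D \ E).card
          | (false, true) => (E \ D).card
          | (false, false) => (Dᶜ ∩ Eᶜ).card) := by
    rintro D E ⟨b1, b2⟩
    cases b1 <;> cases b2 <;>
      · congr 1
        ext x
        simp [Finset.mem_filter, Prod.ext_iff, Finset.mem_compl]
        try tauto
  have h4 : (Bᶜ ∩ Cᶜ).card = (B'ᶜ ∩ C'ᶜ).card := by
    have e1 : (Bᶜ ∩ Cᶜ) = (B ∪ C)ᶜ := by rw [Finset.compl_union]
    have e2 : (B'ᶜ ∩ C'ᶜ) = (B' ∪ C')ᶜ := by rw [Finset.compl_union]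
    have u1 : (B ∪ C).card = (B ∩ C).card + (B \ C).card + (C \ B).card := by
      have := Finset.card_sdiff_add_card_inter C B
      have h := Finset.card_sdiff_add_card_inter B C
      have : B ∪ C = (B ∩ C) ∪ (B \ C) ∪ (C \ B) := by
        ext x; by_cases hx : x ∈ B <;> by_cases hy : x ∈ C <;> simp [hx, hy]
      rw [this, Finset.card_union_of_disjoint, Finset.card_union_of_disjoint]
      · simp [Finset.disjoint_left]; tauto
      · simp [Finset.disjoint_left]; tauto
    have u2 : (B' ∪ C').card = (B' ∩ C').card + (B' \ C').card + (C' \ B').card := by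
      have : B' ∪ C' = (B' ∩ C') ∪ (B' \ C') ∪ (C' \ B') := by
        ext x; by_cases hx : x ∈ B' <;> by_cases hy : x ∈ C' <;> simp [hx, hy]
      rw [this, Finset.card_union_of_disjoint, Finset.card_union_of_disjoint]
      · simp [Finset.disjoint_left]; tauto
      · simp [Finset.disjoint_left]; tauto
    rw [e1, e2, Finset.card_compl, Finset.card_compl, u1, u2, h1, h2, h3]
  have fibcard : ∀ i : Bool × Bool,
      Fintype.card {x // c x = i} = Fintype.card {x // c' x = i} := by
    rintro ⟨b1, b2⟩
    rw [Fintype.card_subtype, Fintype.card_subtype, hc, hc']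
    rw [filt B C, filt B' C']
    cases b1 <;> cases b2 <;> simp [h1, h2, h3, h4]
  set e : ∀ i, {x // c x = i} ≃ {x // c' x = i} := fun i => Fintype.equivOfCardEq (fibcard i)
  refine ⟨Equiv.ofFiberEquiv e, fun x => ?_⟩
  have h5 := Equiv.ofFiberEquiv_map e x
  have hB : (Equiv.ofFiberEquiv e x ∈ B' : Bool) = (x ∈ B : Bool) := congrArg Prod.fst h5
  have hC : (Equiv.ofFiberEquiv e x ∈ C' : Bool) = (x ∈ C : Bool) := congrArg Prod.snd h5
  exact ⟨decide_eq_decide.mp hB, decide_eq_decide.mp hC⟩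
lemma swap_image_eq (x y : Fin m) (D : Finset (Fin m)) (hD : x ∈ D ↔ y ∈ D) :
    D.image (Equiv.swap x y) = D := by
  have key : ∀ a, a ∈ D → Equiv.swap x y a ∈ D := by
    intro a ha
    rcases eq_or_ne a x with rfl | hax
    · rwa [Equiv.swap_apply_left, ← hD]
    rcases eq_or_ne a y with rfl | hay
    · rwa [Equiv.swap_apply_right, hD]
    · rwa [Equiv.swap_apply_of_ne_of_ne hax hay]
  ext z
  simp only [Finset.mem_image]
  constructor
  · rintro ⟨a, ha, rfl⟩; exact key a ha
  · intro hz
    exact ⟨Equiv.swap x y z, key z hz, Equiv.swap_apply_self x y z⟩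

/-- There is an even permutation mapping a pair of finsets onto another pair with
matching Venn cardinalities. -/
lemma exists_alt_perm_pair (hm : 5 ≤ m) (B C B' C' : Finset (Fin m))
    (h1 : (B ∩ C).card = (B' ∩ C').card) (h2 : (B \ C).card = (B' \ C').card)
    (h3 : (C \ B).card = (C' \ B').card) :
    ∃ g : Equiv.Perm (Fin m), g ∈ alternatingGroup (Fin m) ∧
      B.image g = B' ∧ C.image g = C' := by
  classical
  obtain ⟨g, hg⟩ := exists_perm_pair B C B' C' h1 h2 h3
  have himg : ∀ (h : Equiv.Perm (Fin m)),
      (∀ x, (h x ∈ B' ↔ x ∈ B) ∧ (h x ∈ C' ↔ x ∈ C)) →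
      B.image h = B' ∧ C.image h = C' := by
    intro h hh
    constructor <;> (ext z; simp only [Finset.mem_image]; constructor)
    · rintro ⟨a, ha, rfl⟩; exact (hh a).1.mpr ha
    · intro hz
      exact ⟨h⁻¹ z, (hh (h⁻¹ z)).1.mp (by simpa using hz), by simp⟩
    · rintro ⟨a, ha, rfl⟩; exact (hh a).2.mpr ha
    · intro hz
      exact ⟨h⁻¹ z, (hh (h⁻¹ z)).2.mp (by simpa using hz), by simp⟩
  rcases Int.units_eq_one_or (Equiv.Perm.sign g) with hs | hs
  · exact ⟨g, Equiv.Perm.mem_alternatingGroup.mpr hs, himg g hg⟩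
  · -- fix parity with a swap inside one Venn cell
    have hcard : Fintype.card (Bool × Bool) < Fintype.card (Fin m) := by
      simp only [Fintype.card_prod, Fintype.card_bool, Fintype.card_fin]
      omega
    obtain ⟨x, y, hxy, hcxy⟩ :=
      Fintype.exists_ne_map_eq_of_card_lt
        (fun x : Fin m => ((x ∈ B : Bool), (x ∈ C : Bool))) hcard
    have hBxy : x ∈ B ↔ y ∈ B := decide_eq_decide.mp (congrArg Prod.fst hcxy)
    have hCxy : x ∈ C ↔ y ∈ C := decide_eq_decide.mp (congrArg Prod.snd hcxy)
    refine ⟨g * Equiv.swap x y, ?_, ?_⟩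
    · rw [Equiv.Perm.mem_alternatingGroup, Equiv.Perm.sign_mul, hs,
        Equiv.Perm.sign_swap hxy]
      rfl
    · have hB : B.image ⇑(g * Equiv.swap x y) = B' := by
        rw [show ⇑(g * Equiv.swap x y) = ⇑g ∘ ⇑(Equiv.swap x y) from rfl,
          ← Finset.image_image, swap_image_eq x y B hBxy]
        exact (himg g hg).1
      have hC : C.image ⇑(g * Equiv.swap x y) = C' := by
        rw [show ⇑(g * Equiv.swap x y) = ⇑g ∘ ⇑(Equiv.swap x y) from rfl,
          ← Finset.image_image, swap_image_eq x y C hCxy]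
        exact (himg g hg).2
      exact ⟨hB, hC⟩
lemma exists_alt_perm_pair' (hm : 5 ≤ m) {k : ℕ} (B C B' C' : Finset (Fin m))
    (hB : B.card = k) (hC : C.card = k) (hB' : B'.card = k) (hC' : C'.card = k)
    (hj : (B ∩ C).card = (B' ∩ C').card) :
    ∃ g : Equiv.Perm (Fin m), g ∈ alternatingGroup (Fin m) ∧
      B.image g = B' ∧ C.image g = C' := by
  apply exists_alt_perm_pair hm B C B' C' hj
  · have e1 := Finset.card_sdiff_add_card_inter B C
    have e2 := Finset.card_sdiff_add_card_inter B' C'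
    omega
  · have e1 := Finset.card_sdiff_add_card_inter C B
    have e2 := Finset.card_sdiff_add_card_inter C' B'
    rw [Finset.inter_comm C B] at e1
    rw [Finset.inter_comm C' B'] at e2
    omega

lemma count_inter {m k : ℕ} (j : ℕ) (hj : j ≤ k) (hkm : k ≤ m)
    (B : Finset (Fin m)) (hB : B.card = k) :
    ((Finset.univ : Finset (KSubsets m k)).filter (fun C => (B ∩ C.1).card = j)).card
      = k.choose j * (m - k).choose (k - j) := by
  classical
  have htarget : ((B.powersetCard j) ×ˢ (Bᶜ.powersetCard (k - j))).card
      = k.choose j * (m - k).choose (k - j) := by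
    rw [Finset.card_product, Finset.card_powersetCard, Finset.card_powersetCard,
      Finset.card_compl, Fintype.card_fin, hB]
  rw [← htarget]
  refine Finset.card_bij' (fun C _ => (C.1 ∩ B, C.1 \ B))
    (fun P hP => (⟨P.1 ∪ P.2, ?_⟩ : KSubsets m k)) ?_ ?_ ?_ ?_
  · -- card of union
    rw [Finset.mem_product, Finset.mem_powersetCard, Finset.mem_powersetCard] at hP
    obtain ⟨⟨hP1, hP1c⟩, hP2, hP2c⟩ := hP
    have hdisj : Disjoint P.1 P.2 := by
      refine Finset.disjoint_left.mpr fun a haP haQ => ?_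
      exact (Finset.mem_compl.mp (hP2 haQ)) (hP1 haP)
    rw [Finset.card_union_of_disjoint hdisj, hP1c, hP2c]
    omega
  · -- i maps into product
    intro C hC
    rw [Finset.mem_filter] at hC
    rw [Finset.mem_product, Finset.mem_powersetCard, Finset.mem_powersetCard]
    refine ⟨⟨Finset.inter_subset_right, by rw [Finset.inter_comm]; exact hC.2⟩,
      fun a ha => Finset.mem_compl.mpr (Finset.mem_sdiff.mp ha).2, ?_⟩
    show (C.1 \ B).card = k - j
    have h5 := Finset.card_sdiff_add_card_inter C.1 B
    rw [Finset.inter_comm C.1 B] at h5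
    have hc2 := hC.2
    have hc1 := C.2
    omega
  · -- j maps into filter
    intro P hP
    rw [Finset.mem_product, Finset.mem_powersetCard, Finset.mem_powersetCard] at hP
    obtain ⟨⟨hP1, hP1c⟩, hP2, hP2c⟩ := hP
    rw [Finset.mem_filter]
    refine ⟨Finset.mem_univ _, ?_⟩
    dsimp only
    have : B ∩ (P.1 ∪ P.2) = P.1 := by
      ext a
      simp only [Finset.mem_inter, Finset.mem_union]
      constructor
      · rintro ⟨haB, haP | haQ⟩
        · exact haP
        · exact absurd haB (Finset.mem_compl.mp (hP2 haQ))
      · intro h; exact ⟨hP1 h, Or.inl h⟩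
    rw [this, hP1c]
  · -- left inverse
    intro C hC
    apply Subtype.ext
    dsimp only
    ext a
    simp only [Finset.mem_union, Finset.mem_inter, Finset.mem_sdiff]
    tauto
  · -- right inverse
    intro P hP
    rw [Finset.mem_product, Finset.mem_powersetCard, Finset.mem_powersetCard] at hP
    obtain ⟨⟨hP1, hP1c⟩, hP2, hP2c⟩ := hP
    have h1 : (P.1 ∪ P.2) ∩ B = P.1 := by
      ext a
      simp only [Finset.mem_inter, Finset.mem_union]
      constructor
      · rintro ⟨haP | haQ, haB⟩
        · exact haP
        · exact absurd haB (Finset.mem_compl.mp (hP2 haQ))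
      · intro h; exact ⟨Or.inl h, hP1 h⟩
    have h2 : (P.1 ∪ P.2) \ B = P.2 := by
      ext a
      simp only [Finset.mem_sdiff, Finset.mem_union]
      constructor
      · rintro ⟨haP | haQ, haB⟩
        · exact absurd (hP1 haP) haB
        · exact haQ
      · intro h; exact ⟨Or.inr h, Finset.mem_compl.mp (hP2 h)⟩
    dsimp only
    rw [h1, h2]
section Arith

lemma ar_le_choose {k i : ℕ} (h1 : 1 ≤ i) (h2 : i ≤ k - 1) (hk : 1 ≤ k) :
    k ≤ k.choose i := by
  -- k * C(k-1, i-1) = C(k,i) * i and C(k-1,i-1) ≥ C(i,i-1) = i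
  have key := Nat.add_one_mul_choose_eq (k - 1) (i - 1)
  have hk1 : k - 1 + 1 = k := by omega
  have hi1 : i - 1 + 1 = i := by omega
  rw [hk1, hi1] at key
  have e : i.choose (i - 1) = i := by
    rw [Nat.choose_symm (by omega : 1 ≤ i), Nat.choose_one_right]
  have hmono : i ≤ (k - 1).choose (i - 1) := by
    calc i = i.choose (i - 1) := e.symm
      _ ≤ _ := Nat.choose_le_choose (i - 1) (by omega)
  have h6 : k * i ≤ k * ((k - 1).choose (i - 1)) := Nat.mul_le_mul_left k hmono
  rw [key] at h6
  exact Nat.le_of_mul_le_mul_right h6 (by omega)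

lemma ar_lt_choose {n r : ℕ} (h1 : 2 ≤ r) (h2 : r + 2 ≤ n) : n < n.choose r := by
  have key := Nat.add_one_mul_choose_eq (n - 1) (r - 1)
  have hn1 : n - 1 + 1 = n := by omega
  have hr1 : r - 1 + 1 = r := by omega
  rw [hn1, hr1] at key
  -- C(n-1, r-1) ≥ C(r+1, r-1) = C(r+1, 2) = r + C(r,2) ≥ r + 1
  have h3 : r + 1 ≤ (n - 1).choose (r - 1) := by
    have e1 : (r + 1).choose (r - 1) = (r + 1).choose 2 := by
      rw [show r - 1 = r + 1 - 2 by omega]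
      exact Nat.choose_symm (by omega)
    have e2 : (r + 1).choose 2 = r.choose 1 + r.choose 2 := Nat.choose_succ_succ r 1
    have e3 : 1 ≤ r.choose 2 := Nat.choose_pos (by omega)
    calc r + 1 ≤ r.choose 1 + r.choose 2 := by rw [Nat.choose_one_right]; omega
      _ = (r + 1).choose (r - 1) := by rw [e1, e2]
      _ ≤ (n - 1).choose (r - 1) := Nat.choose_le_choose _ (by omega)
  have h4 : n * (r + 1) ≤ n * ((n - 1).choose (r - 1)) := Nat.mul_le_mul_left n h3
  rw [key] at h4
  have h5 : n * r + n ≤ n.choose r * r := by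
    calc n * r + n = n * (r + 1) := by ring
      _ ≤ n.choose r * r := h4
  nlinarith [Nat.choose_pos (show r ≤ n by omega)]

lemma ar_square {k s : ℕ} (hk : 2 ≤ k) (hs : k ≤ s) (h : s.choose (k - 1) = k ^ 2) :
    k = 2 ∧ s = 4 := by
  rcases eq_or_lt_of_le hk with rfl | hk3
  · -- k = 2
    rw [show 2 - 1 = 1 from rfl, Nat.choose_one_right] at h
    norm_num at h
    omega
  · -- k ≥ 3 : contradiction
    exfalso
    have hk3' : 3 ≤ k := hk3
    rcases Nat.lt_or_ge s (k + 2) with hs2 | hs2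
    · -- s = k or k+1
      rcases (by omega : s = k ∨ s = k + 1) with rfl | rfl
      · have e0 : s.choose (s - 1) = s := by
          rw [Nat.choose_symm (by omega : 1 ≤ s), Nat.choose_one_right]
        rw [e0] at h
        nlinarith
      · have e1 : (k + 1).choose (k - 1) = (k + 1).choose 2 := by
          rw [show k - 1 = k + 1 - 2 by omega]
          exact Nat.choose_symm (by omega)
        rw [e1] at h
        have e2 : (k + 1).choose 2 * 2 = (k + 1) * k := by
          have h9 := Nat.add_one_mul_choose_eq k 1
          rw [Nat.choose_one_right] at h9
          norm_num at h9
          omega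
        nlinarith
    · -- s ≥ k + 2
      have h6 : (k + 2).choose 3 * 6 = (k + 2) * (k + 1) * k := by
        have i1 := Nat.add_one_mul_choose_eq (k + 1) 2
        have i2 := Nat.add_one_mul_choose_eq k 1
        rw [Nat.choose_one_right] at i2
        norm_num at i1 i2
        -- i2 : (k+1) * k = C(k+1,2) * 2 ; i1 : (k+2)*C(k+1,2) = C(k+2,3)*3
        nlinarith
      have e1 : (k + 2).choose (k - 1) = (k + 2).choose 3 := by
        rw [show k - 1 = k + 2 - 3 by omega]
        exact Nat.choose_symm (by omega)
      have hmono : (k + 2).choose (k - 1) ≤ s.choose (k - 1) :=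
        Nat.choose_le_choose _ (by omega)
      rw [e1, h] at hmono
      -- (k+2) choose 3 ≤ k^2, but (k+2)(k+1)k > 6 k^2 for k ≥ 3
      nlinarith

/-- The main arithmetic dichotomy. -/
lemma ar_main {k n i : ℕ} (hk : 2 ≤ k) (hn : k + 1 ≤ n) (hik : i ≤ k - 1)
    (h : k.choose i * n.choose (k - i) = k * n) :
    i = k - 1 ∨ (i = 0 ∧ k = 2 ∧ n = 5) := by
  rcases eq_or_ne i (k - 1) with rfl | hne
  · exact Or.inl rfl
  rcases Nat.eq_zero_or_pos i with rfl | hipos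
  · -- i = 0 : C(n,k) = k*n forces k = 2, n = 5
    right
    refine ⟨rfl, ?_⟩
    rw [Nat.choose_zero_right, Nat.one_mul, Nat.sub_zero] at h
    have key := Nat.add_one_mul_choose_eq (n - 1) (k - 1)
    rw [(by omega : n - 1 + 1 = n), (by omega : k - 1 + 1 = k)] at key
    -- key : n * C(n-1, k-1) = C(n,k) * k
    have h2 : (n - 1).choose (k - 1) = k ^ 2 := by
      have : n * ((n - 1).choose (k - 1)) = n * k ^ 2 := by
        rw [key, h]; ring
      exact Nat.eq_of_mul_eq_mul_left (by omega) this
    obtain ⟨hk2, hs4⟩ := ar_square hk (by omega) h2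
    exact ⟨hk2, by omega⟩
  · -- 1 ≤ i ≤ k - 2 : contradiction
    exfalso
    have hik2 : i ≤ k - 2 := by omega
    have c1 : k ≤ k.choose i := ar_le_choose hipos (by omega) (by omega)
    have c2 : n < n.choose (k - i) := ar_lt_choose (by omega) (by omega)
    nlinarith

end Arith
section Glue

variable {k : ℕ}

lemma ksubsetsHom_coe (g : Equiv.Perm (Fin m)) (D : KSubsets m k) :
    ((ksubsetsHom m k g D) : Finset (Fin m)) = D.1.image g := by
  show (g • D.1 : Finset (Fin m)) = D.1.image g
  rw [Finset.smul_finset_def]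
  rfl

/-- Conjugation invariance of intersection cardinalities under an element of the
normalizer of `A_m^{(k)}`. -/
lemma inter_card_invariant (hm : 5 ≤ m)
    (π : Equiv.Perm (KSubsets m k))
    (hπ : π ∈ Subgroup.normalizer
      (Subgroup.map (ksubsetsHom m k) (alternatingGroup (Fin m))))
    (B C B' C' : KSubsets m k)
    (h : (B.1 ∩ C.1).card = (B'.1 ∩ C'.1).card) :
    ((π B).1 ∩ (π C).1).card = ((π B').1 ∩ (π C').1).card := by
  classical
  obtain ⟨g, hg, hgB, hgC⟩ :=
    exists_alt_perm_pair' hm B.1 C.1 B'.1 C'.1 B.2 C.2 B'.2 C'.2 h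
  have h1 : ksubsetsHom m k g ∈
      Subgroup.map (ksubsetsHom m k) (alternatingGroup (Fin m)) :=
    ⟨g, hg, rfl⟩
  obtain ⟨g', hg', hgeq⟩ := (Subgroup.mem_normalizer_iff.mp hπ _).mp h1
  have key : ∀ D D' : KSubsets m k, D'.1 = D.1.image g →
      (π D').1 = ((π D).1).image g' := by
    intro D D' hDD
    have e : π D' = (ksubsetsHom m k g') (π D) := by
      rw [hgeq]
      show π D' = (π * ksubsetsHom m k g * π⁻¹) (π D)
      rw [Equiv.Perm.mul_apply, Equiv.Perm.mul_apply, Equiv.Perm.inv_apply_self]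
      congr 1
      apply Subtype.ext
      rw [ksubsetsHom_coe, hDD]
    rw [e, ksubsetsHom_coe]
  rw [key B B' hgB.symm, key C C' hgC.symm,
    ← Finset.image_inter _ _ g'.injective,
    Finset.card_image_of_injective _ g'.injective]

/-- Transport of a two-condition count along a permutation of `Fin m`. -/
lemma count_pair_transport (g : Equiv.Perm (Fin m)) (E F : Finset (Fin m)) (a b : ℕ) :
    ((Finset.univ : Finset (KSubsets m k)).filter
      (fun D => ((E.image g) ∩ D.1).card = a ∧ ((F.image g) ∩ D.1).card = b)).card
    = ((Finset.univ : Finset (KSubsets m k)).filter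
      (fun D => (E ∩ D.1).card = a ∧ (F ∩ D.1).card = b)).card := by
  classical
  refine Finset.card_bij'
    (fun D _ => (⟨D.1.image ⇑(g⁻¹), by rw [Finset.card_image_of_injective _ (g⁻¹).injective]; exact D.2⟩ : KSubsets m k))
    (fun D _ => (⟨D.1.image g, by rw [Finset.card_image_of_injective _ g.injective]; exact D.2⟩ : KSubsets m k))
    ?_ ?_ ?_ ?_
  · intro D hD
    rw [Finset.mem_filter] at hD ⊢
    obtain ⟨-, hD1, hD2⟩ := hD
    refine ⟨Finset.mem_univ _, ?_, ?_⟩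
    · dsimp only
      rw [show E ∩ D.1.image ⇑(g⁻¹) = ((E.image g) ∩ D.1).image ⇑(g⁻¹) by
        rw [Finset.image_inter _ _ (g⁻¹).injective, Finset.image_image]
        congr 1
        · rw [show (⇑(g⁻¹) ∘ ⇑g) = id by ext x; simp, Finset.image_id]]
      rw [Finset.card_image_of_injective _ (g⁻¹).injective]
      exact hD1
    · dsimp only
      rw [show F ∩ D.1.image ⇑(g⁻¹) = ((F.image g) ∩ D.1).image ⇑(g⁻¹) by
        rw [Finset.image_inter _ _ (g⁻¹).injective, Finset.image_image]
        congr 1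
        · rw [show (⇑(g⁻¹) ∘ ⇑g) = id by ext x; simp, Finset.image_id]]
      rw [Finset.card_image_of_injective _ (g⁻¹).injective]
      exact hD2
  · intro D hD
    rw [Finset.mem_filter] at hD ⊢
    obtain ⟨-, hD1, hD2⟩ := hD
    refine ⟨Finset.mem_univ _, ?_, ?_⟩
    · dsimp only
      rw [show (E.image g) ∩ D.1.image ⇑g = (E ∩ D.1).image ⇑g by
        rw [Finset.image_inter _ _ g.injective]]
      rw [Finset.card_image_of_injective _ g.injective]
      exact hD1
    · dsimp only
      rw [show (F.image g) ∩ D.1.image ⇑g = (F ∩ D.1).image ⇑g by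
        rw [Finset.image_inter _ _ g.injective]]
      rw [Finset.card_image_of_injective _ g.injective]
      exact hD2
  · intro D hD
    apply Subtype.ext
    dsimp only
    rw [Finset.image_image, show (⇑g ∘ ⇑(g⁻¹)) = id by ext x; simp, Finset.image_id]
  · intro D hD
    apply Subtype.ext
    dsimp only
    rw [Finset.image_image, show (⇑(g⁻¹) ∘ ⇑g) = id by ext x; simp, Finset.image_id]

end Glue
section Adj

set_option maxRecDepth 10000 in
lemma seven_two_count1 :
    ((Finset.univ : Finset (KSubsets 7 2)).filter
      (fun D => ((({0,1} : Finset (Fin 7))) ∩ D.1).card = 1 ∧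
        ((({0,2} : Finset (Fin 7))) ∩ D.1).card = 1)).card = 5 := by decide

set_option maxRecDepth 10000 in
lemma seven_two_count0 :
    ((Finset.univ : Finset (KSubsets 7 2)).filter
      (fun D => ((({0,1} : Finset (Fin 7))) ∩ D.1).card = 0 ∧
        ((({2,3} : Finset (Fin 7))) ∩ D.1).card = 0)).card = 3 := by decide

variable {k : ℕ}

/-- Two-condition counting bijection along `π` in the normalizer. -/
lemma count_pair_pi (hm : 5 ≤ m)
    (π : Equiv.Perm (KSubsets m k))
    (hπ : π ∈ Subgroup.normalizer
      (Subgroup.map (ksubsetsHom m k) (alternatingGroup (Fin m))))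
    (B C : KSubsets m k) (a b : ℕ)
    (ha : ((π B).1 ∩ (π C).1).card = a) (hb : (B.1 ∩ C.1).card = b) :
    ((Finset.univ : Finset (KSubsets m k)).filter
      (fun D => (B.1 ∩ D.1).card = b ∧ (C.1 ∩ D.1).card = b)).card
    = ((Finset.univ : Finset (KSubsets m k)).filter
      (fun D => ((π B).1 ∩ D.1).card = a ∧ ((π C).1 ∩ D.1).card = a)).card := by
  classical
  have hπ' : π⁻¹ ∈ Subgroup.normalizer
      (Subgroup.map (ksubsetsHom m k) (alternatingGroup (Fin m))) :=
    (Subgroup.normalizer _).inv_mem hπ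
  refine Finset.card_bij' (fun D _ => π D) (fun D _ => π⁻¹ D) ?_ ?_ ?_ ?_
  · intro D hD
    rw [Finset.mem_filter] at hD ⊢
    obtain ⟨-, h1, h2⟩ := hD
    refine ⟨Finset.mem_univ _, ?_, ?_⟩
    · rw [← ha]
      exact inter_card_invariant hm π hπ B D B C (by rw [h1, hb])
    · rw [← ha]
      exact inter_card_invariant hm π hπ C D B C (by rw [h2, hb])
  · intro D hD
    rw [Finset.mem_filter] at hD ⊢
    obtain ⟨-, h1, h2⟩ := hD
    have e1 := inter_card_invariant hm π⁻¹ hπ' (π B) D (π B) (π C) (by rw [h1, ha])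
    have e2 := inter_card_invariant hm π⁻¹ hπ' (π C) D (π C) (π B)
      (by rw [h2, ← ha, Finset.inter_comm])
    simp only [Equiv.Perm.inv_apply_self] at e1 e2
    refine ⟨Finset.mem_univ _, ?_, ?_⟩
    · rw [e1, hb]
    · rw [e2, Finset.inter_comm, hb]
  · intro D _; exact Equiv.Perm.inv_apply_self π D
  · intro D _; exact Equiv.Perm.apply_inv_self π D

/-- The key step: elements of the normalizer preserve Johnson adjacency. -/
lemma adj_preserved (hm : 5 ≤ m) (hk2 : 2 ≤ k) (hkm : 2 * k < m)
    (π : Equiv.Perm (KSubsets m k))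
    (hπ : π ∈ Subgroup.normalizer
      (Subgroup.map (ksubsetsHom m k) (alternatingGroup (Fin m))))
    (B C : KSubsets m k) (hBC : (B.1 ∩ C.1).card = k - 1) :
    ((π B).1 ∩ (π C).1).card = k - 1 := by
  classical
  have hπ' : π⁻¹ ∈ Subgroup.normalizer
      (Subgroup.map (ksubsetsHom m k) (alternatingGroup (Fin m))) :=
    (Subgroup.normalizer _).inv_mem hπ
  set i := ((π B).1 ∩ (π C).1).card with hi
  have hik : i ≤ k := by
    have h1 : ((π B).1 ∩ (π C).1).card ≤ (π B).1.card :=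
      Finset.card_le_card Finset.inter_subset_left
    rw [(π B).2] at h1
    omega
  have hineq : i ≤ k - 1 := by
    by_contra hcon
    have hike : i = k := by omega
    have hsub : (π B).1 ∩ (π C).1 = (π B).1 := by
      apply Finset.eq_of_subset_of_card_le Finset.inter_subset_left
      rw [(π B).2]
      omega
    have hss : (π B).1 ⊆ (π C).1 := by
      rw [← hsub]; exact Finset.inter_subset_right
    have heq : (π B) = (π C) := by
      apply Subtype.ext
      apply Finset.eq_of_subset_of_card_le hss
      rw [(π B).2, (π C).2]
    have : B = C := π.injective heq
    subst this
    rw [Finset.inter_self, B.2] at hBC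
    omega
  have count1 : ((Finset.univ : Finset (KSubsets m k)).filter
      (fun D => (B.1 ∩ D.1).card = k - 1)).card
      = ((Finset.univ : Finset (KSubsets m k)).filter
      (fun D => ((π B).1 ∩ D.1).card = i)).card := by
    refine Finset.card_bij' (fun D _ => π D) (fun D _ => π⁻¹ D) ?_ ?_ ?_ ?_
    · intro D hD
      rw [Finset.mem_filter] at hD ⊢
      refine ⟨Finset.mem_univ _, ?_⟩
      rw [hi]
      exact inter_card_invariant hm π hπ B D B C (by rw [hD.2, hBC])
    · intro D hD
      rw [Finset.mem_filter] at hD ⊢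
      refine ⟨Finset.mem_univ _, ?_⟩
      have e1 := inter_card_invariant hm π⁻¹ hπ' (π B) D (π B) (π C)
        (by rw [hD.2, hi])
      simp only [Equiv.Perm.inv_apply_self] at e1
      rw [e1, hBC]
    · intro D _; exact Equiv.Perm.inv_apply_self π D
    · intro D _; exact Equiv.Perm.apply_inv_self π D
  rw [count_inter (k - 1) (by omega) (by omega) B.1 B.2,
    count_inter i (by omega) (by omega) (π B).1 (π B).2] at count1
  have lhs1 : k.choose (k - 1) = k := by
    rw [Nat.choose_symm (by omega : 1 ≤ k), Nat.choose_one_right]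
  have lhs2 : k - (k - 1) = 1 := by omega
  rw [lhs1, lhs2, Nat.choose_one_right] at count1
  rcases ar_main hk2 (by omega : k + 1 ≤ m - k) hineq count1.symm with h | ⟨hi0, hk2', hn5⟩
  · exact h
  · -- the exceptional case m = 7, k = 2
    exfalso
    have hm7 : m = 7 := by omega
    subst hk2'
    subst hm7
    have hBC1 : (B.1 ∩ C.1).card = 1 := hBC
    have hcc : ((π B).1 ∩ (π C).1).card = 0 := by rw [← hi, hi0]
    -- transport the (1,1)-count from the canonical pair {0,1},{0,2}
    obtain ⟨g, -, hgB, hgC⟩ := exists_alt_perm_pair' (by norm_num : 5 ≤ 7)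
      ({0,1} : Finset (Fin 7)) ({0,2} : Finset (Fin 7)) B.1 C.1
      (by decide) (by decide) B.2 C.2 (by rw [hBC1]; decide)
    have t1 := count_pair_transport (k := 2) g ({0,1} : Finset (Fin 7))
      ({0,2} : Finset (Fin 7)) 1 1
    rw [hgB, hgC] at t1
    -- transport the (0,0)-count from the canonical pair {0,1},{2,3}
    obtain ⟨g2, -, hg2B, hg2C⟩ := exists_alt_perm_pair' (by norm_num : 5 ≤ 7)
      ({0,1} : Finset (Fin 7)) ({2,3} : Finset (Fin 7)) (π B).1 (π C).1
      (by decide) (by decide) (π B).2 (π C).2 (by rw [hcc]; decide)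
    have t2 := count_pair_transport (k := 2) g2 ({0,1} : Finset (Fin 7))
      ({2,3} : Finset (Fin 7)) 0 0
    rw [hg2B, hg2C] at t2
    have main := count_pair_pi (by norm_num : 5 ≤ 7) π hπ B C 0 1 hcc hBC1
    rw [t1, t2, seven_two_count1, seven_two_count0] at main
    omega

end Adj
section Johnson

/-- Two distinct `K`-subsets intersect in at most `K-1` elements. -/
lemma inter_card_le_of_ne {K : ℕ} (B C : KSubsets m K) (hne : B ≠ C) :
    (B.1 ∩ C.1).card ≤ K - 1 := by
  have h1 : (B.1 ∩ C.1).card ≤ K := by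
    have : (B.1 ∩ C.1).card ≤ B.1.card := Finset.card_le_card Finset.inter_subset_left
    rw [B.2] at this; exact this
  rcases Nat.lt_or_ge (B.1 ∩ C.1).card K with h | h
  · omega
  · exfalso
    have hik : (B.1 ∩ C.1).card = K := le_antisymm h1 h
    have hsub : B.1 ∩ C.1 = B.1 :=
      Finset.eq_of_subset_of_card_le Finset.inter_subset_left (by rw [B.2, hik])
    have hss : B.1 ⊆ C.1 := by rw [← hsub]; exact Finset.inter_subset_right
    exact hne (Subtype.ext (Finset.eq_of_subset_of_card_le hss (by rw [B.2, C.2])))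

/-- The number of `(K+1)`-subsets containing a fixed `K`-set is `m - K`. -/
lemma card_star {K : ℕ} (hKm : K < m) (S : Finset (Fin m)) (hS : S.card = K) :
    ((Finset.univ : Finset (KSubsets m (K+1))).filter (fun B => S ⊆ B.1)).card
      = m - K := by
  classical
  have hcompl : (Sᶜ : Finset (Fin m)).card = m - K := by
    rw [Finset.card_compl, Fintype.card_fin, hS]
  rw [← hcompl]
  have hsd : ∀ B : KSubsets m (K+1), S ⊆ B.1 → (B.1 \ S).card = 1 := by
    intro B hSB
    rw [Finset.card_sdiff_of_subset hSB, B.2, hS]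
    omega
  refine Finset.card_bij'
    (fun B hB => (B.1 \ S).min' (by
      apply Finset.card_pos.mp
      rw [hsd B (Finset.mem_filter.mp hB).2]
      omega))
    (fun x hx => (⟨insert x S, by
      rw [Finset.card_insert_of_notMem (Finset.mem_compl.mp (by simpa using hx)), hS]⟩
        : KSubsets m (K+1))) ?_ ?_ ?_ ?_
  · -- min' lands in Sᶜ
    intro B hB
    have h2 := Finset.min'_mem (B.1 \ S) (by
      apply Finset.card_pos.mp; rw [hsd B (Finset.mem_filter.mp hB).2]; omega)
    rw [Finset.mem_sdiff] at h2
    exact Finset.mem_compl.mpr h2.2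
  · -- insert lands in filter
    intro x hx
    rw [Finset.mem_filter]
    exact ⟨Finset.mem_univ _, Finset.subset_insert _ _⟩
  · -- left inverse
    intro B hB
    have hB2 := (Finset.mem_filter.mp hB).2
    apply Subtype.ext
    dsimp only
    apply Finset.eq_of_subset_of_card_le
    · intro z hz
      rcases Finset.mem_insert.mp hz with rfl | hzS
      · exact (Finset.mem_sdiff.mp (Finset.min'_mem _ _)).1
      · exact hB2 hzS
    · rw [B.2, Finset.card_insert_of_notMem
        (Finset.mem_sdiff.mp (Finset.min'_mem _ _)).2, hS]
  · -- right inverse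
    intro x hx
    have hxS : x ∉ S := Finset.mem_compl.mp (by simpa using hx)
    have hsd2 : insert x S \ S = {x} := by
      ext z
      simp only [Finset.mem_sdiff, Finset.mem_insert, Finset.mem_singleton]
      constructor
      · rintro ⟨rfl | hz, hzS⟩
        · rfl
        · exact absurd hz hzS
      · rintro rfl; exact ⟨Or.inl rfl, hxS⟩
    simp only [hsd2]
    exact Finset.min'_singleton x

/-- Any large enough clique in the Johnson graph is a star over a common `K`-set. -/
lemma clique_star {K : ℕ} (G : Finset (KSubsets m (K+1)))
    (hadj : ∀ B ∈ G, ∀ C ∈ G, B ≠ C → (B.1 ∩ C.1).card = K)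
    (hcard : K + 3 ≤ G.card) :
    ∃ S : Finset (Fin m), S.card = K ∧ ∀ B ∈ G, S ⊆ B.1 := by
  classical
  by_contra hno
  push_neg at hno
  obtain ⟨B1, hB1, B2, hB2, h12⟩ := Finset.one_lt_card.mp (by omega : 1 < G.card)
  have hS : (B1.1 ∩ B2.1).card = K := hadj B1 hB1 B2 hB2 h12
  obtain ⟨B3, hB3, hB3S⟩ := hno (B1.1 ∩ B2.1) hS
  set U := B1.1 ∪ B2.1 with hU
  have hUcard : U.card = K + 2 := by
    have h5 := Finset.card_union_add_card_inter B1.1 B2.1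
    rw [B1.2, B2.2, hS, ← hU] at h5
    omega
  have pairlem : ∀ Ba, Ba ∈ G → ∀ Bb, Bb ∈ G → Ba ≠ Bb → ∀ C, C ∈ G →
      ¬ C.1 ⊆ Ba.1 ∪ Bb.1 → Ba.1 ∩ Bb.1 ⊆ C.1 := by
    intro Ba hBa Bb hBb hab C hC hCU
    have hCa : C ≠ Ba := by rintro rfl; exact hCU Finset.subset_union_left
    have hCb : C ≠ Bb := by rintro rfl; exact hCU Finset.subset_union_right
    obtain ⟨x, hxC, hxU⟩ := Finset.not_subset.mp hCU
    have hWsub : C.1 ∩ (Ba.1 ∪ Bb.1) ⊆ C.1.erase x := by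
      intro z hz
      rw [Finset.mem_inter] at hz
      rw [Finset.mem_erase]
      exact ⟨by rintro rfl; exact hxU hz.2, hz.1⟩
    have hWcard : (C.1 ∩ (Ba.1 ∪ Bb.1)).card ≤ K := by
      have h5 := Finset.card_le_card hWsub
      rwa [Finset.card_erase_of_mem hxC, C.2] at h5
    have ea : C.1 ∩ Ba.1 = C.1 ∩ (Ba.1 ∪ Bb.1) := by
      apply Finset.eq_of_subset_of_card_le
      · exact Finset.inter_subset_inter (Finset.Subset.refl _) Finset.subset_union_left
      · rw [show (C.1 ∩ Ba.1).card = K from by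
          rw [Finset.inter_comm]; exact hadj Ba hBa C hC (Ne.symm hCa)]
        exact hWcard
    have eb : C.1 ∩ Bb.1 = C.1 ∩ (Ba.1 ∪ Bb.1) := by
      apply Finset.eq_of_subset_of_card_le
      · exact Finset.inter_subset_inter (Finset.Subset.refl _) Finset.subset_union_right
      · rw [show (C.1 ∩ Bb.1).card = K from by
          rw [Finset.inter_comm]; exact hadj Bb hBb C hC (Ne.symm hCb)]
        exact hWcard
    have hW : C.1 ∩ Ba.1 ⊆ Ba.1 ∩ Bb.1 := by
      intro z hz
      have hz' : z ∈ C.1 ∩ Bb.1 := by rw [eb, ← ea]; exact hz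
      rw [Finset.mem_inter] at hz hz' ⊢
      exact ⟨hz.2, hz'.2⟩
    have heq : Ba.1 ∩ Bb.1 = C.1 ∩ Ba.1 :=
      (Finset.eq_of_subset_of_card_le hW (by
        rw [hadj Ba hBa Bb hBb hab]
        rw [show (C.1 ∩ Ba.1).card = K from by
          rw [Finset.inter_comm]; exact hadj Ba hBa C hC (Ne.symm hCa)])).symm
    rw [heq]
    exact Finset.inter_subset_left
  have hB3U : B3.1 ⊆ U := by
    by_contra h
    exact hB3S (pairlem B1 hB1 B2 hB2 h12 B3 hB3 h)
  have h31 : B3 ≠ B1 := by rintro rfl; exact hB3S Finset.inter_subset_left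
  have h32 : B3 ≠ B2 := by rintro rfl; exact hB3S Finset.inter_subset_right
  have hU13 : B1.1 ∪ B3.1 = U := by
    apply Finset.eq_of_subset_of_card_le
    · exact Finset.union_subset Finset.subset_union_left hB3U
    · have h5 := Finset.card_union_add_card_inter B1.1 B3.1
      rw [B1.2, B3.2, hadj B1 hB1 B3 hB3 (Ne.symm h31)] at h5
      omega
  have hU23 : B2.1 ∪ B3.1 = U := by
    apply Finset.eq_of_subset_of_card_le
    · exact Finset.union_subset Finset.subset_union_right hB3U
    · have h5 := Finset.card_union_add_card_inter B2.1 B3.1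
      rw [B2.2, B3.2, hadj B2 hB2 B3 hB3 (Ne.symm h32)] at h5
      omega
  have hsing : ∀ x : Fin m, x ∈ U → ∀ (Ba Bb : KSubsets m (K+1)), Ba.1 ⊆ U → Bb.1 ⊆ U →
      x ∉ Ba.1 → x ∉ Bb.1 → Ba = Bb := by
    intro x hx Ba Bb hBaU hBbU hxa hxb
    have key : ∀ Bc : KSubsets m (K+1), Bc.1 ⊆ U → x ∉ Bc.1 → Bc.1 = U \ {x} := by
      intro Bc hBcU hxc
      have h1 : ({x} : Finset (Fin m)) ⊆ U \ Bc.1 := by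
        intro z hz
        rw [Finset.mem_singleton] at hz
        subst hz
        exact Finset.mem_sdiff.mpr ⟨hx, hxc⟩
      have h2 : (U \ Bc.1).card = 1 := by
        rw [Finset.card_sdiff_of_subset hBcU, hUcard, Bc.2]
        omega
      have h3 : ({x} : Finset (Fin m)) = U \ Bc.1 :=
        Finset.eq_of_subset_of_card_le h1 (by rw [h2, Finset.card_singleton])
      rw [← Finset.sdiff_sdiff_eq_self hBcU, ← h3]
    exact Subtype.ext ((key Ba hBaU hxa).trans (key Bb hBbU hxb).symm)
  have hall : ∀ D, D ∈ G → D.1 ⊆ U := by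
    intro D hD
    by_contra hDU
    have d12 := pairlem B1 hB1 B2 hB2 h12 D hD hDU
    have d13 := pairlem B1 hB1 B3 hB3 (Ne.symm h31) D hD (by rw [hU13]; exact hDU)
    have d23 := pairlem B2 hB2 B3 hB3 (Ne.symm h32) D hD (by rw [hU23]; exact hDU)
    have hUD : U ⊆ D.1 := by
      intro x hx
      by_contra hxD
      have n12 : ¬ (x ∈ B1.1 ∧ x ∈ B2.1) := fun h =>
        hxD (d12 (Finset.mem_inter.mpr h))
      have n13 : ¬ (x ∈ B1.1 ∧ x ∈ B3.1) := fun h =>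
        hxD (d13 (Finset.mem_inter.mpr h))
      have n23 : ¬ (x ∈ B2.1 ∧ x ∈ B3.1) := fun h =>
        hxD (d23 (Finset.mem_inter.mpr h))
      by_cases h1x : x ∈ B1.1 <;> by_cases h2x : x ∈ B2.1 <;> by_cases h3x : x ∈ B3.1
      · exact n12 ⟨h1x, h2x⟩
      · exact n12 ⟨h1x, h2x⟩
      · exact n13 ⟨h1x, h3x⟩
      · -- x ∉ B2, x ∉ B3
        exact (Ne.symm h32) (hsing x hx B2 B3 Finset.subset_union_right hB3U h2x h3x)
      · exact n23 ⟨h2x, h3x⟩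
      · -- x ∉ B1, x ∉ B3
        exact (Ne.symm h31) (hsing x hx B1 B3 Finset.subset_union_left hB3U h1x h3x)
      · -- x ∉ B1, x ∉ B2
        exact h12 (hsing x hx B1 B2 Finset.subset_union_left Finset.subset_union_right h1x h2x)
      · exact h12 (hsing x hx B1 B2 Finset.subset_union_left Finset.subset_union_right h1x h2x)
    have h5 : U.card ≤ D.1.card := Finset.card_le_card hUD
    rw [hUcard, D.2] at h5
    omega
  have hinj : G.card ≤ (U.powersetCard (K+1)).card := by
    apply Finset.card_le_card_of_injOn (fun B => B.1)
    · intro B hB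
      simp only [Finset.mem_coe, Finset.mem_powersetCard]
      exact ⟨hall B hB, B.2⟩
    · intro a _ b _ h
      exact Subtype.ext h
  rw [Finset.card_powersetCard, hUcard] at hinj
  have hch : (K+2).choose (K+1) = K + 2 := by
    rw [show K+1 = (K+2) - 1 by omega, Nat.choose_symm (by omega : 1 ≤ K + 2),
      Nat.choose_one_right]
  omega

end Johnson
section JohnsonMain

/-- Base case: permutations of singletons come from point permutations. -/
lemma johnson_aut_one (π : Equiv.Perm (KSubsets m 1)) :
    ∃ σ : Equiv.Perm (Fin m), ∀ B : KSubsets m 1, (π B).1 = B.1.image σ := by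
  classical
  have hne : ∀ B : KSubsets m 1, B.1.Nonempty :=
    fun B => Finset.card_pos.mp (by rw [B.2]; omega)
  have huniq : ∀ (B : KSubsets m 1) (x : Fin m), x ∈ B.1 → B.1 = {x} := by
    intro B x hx
    obtain ⟨a, ha⟩ := Finset.card_eq_one.mp B.2
    rw [ha] at hx ⊢
    rw [Finset.mem_singleton] at hx
    rw [hx]
  set e : Fin m ≃ KSubsets m 1 :=
    { toFun := fun a => ⟨{a}, Finset.card_singleton a⟩
      invFun := fun B => B.1.min' (hne B)
      left_inv := fun a => by simp
      right_inv := fun B => by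
        apply Subtype.ext
        exact (huniq B _ (Finset.min'_mem _ (hne B))).symm } with he
  refine ⟨e.trans (π.trans e.symm), fun B => ?_⟩
  have hBe : B = e (B.1.min' (hne B)) :=
    Subtype.ext (huniq B _ (Finset.min'_mem _ (hne B)))
  rw [huniq B (B.1.min' (hne B)) (Finset.min'_mem _ (hne B)), Finset.image_singleton]
  have hstep : (e.trans (π.trans e.symm)) (B.1.min' (hne B))
      = (π B).1.min' (hne (π B)) := by
    show e.symm (π (e (B.1.min' (hne B)))) = _
    rw [← hBe]
    rfl
  rw [hstep]
  exact huniq (π B) _ (Finset.min'_mem _ _)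

/-- Automorphisms of the Johnson graph `J(m,k)` (for `2k < m`) are induced by
permutations of the points. -/
lemma johnson_aut (k : ℕ) (hk : 1 ≤ k) :
    ∀ (_ : 2 * k < m) (π : Equiv.Perm (KSubsets m k)),
      (∀ B C : KSubsets m k, (B.1 ∩ C.1).card = k - 1 ↔
        ((π B).1 ∩ (π C).1).card = k - 1) →
      ∃ σ : Equiv.Perm (Fin m), ∀ B : KSubsets m k, (π B).1 = B.1.image σ := by
  induction k, hk using Nat.le_induction with
  | base => exact fun _ π _ => johnson_aut_one π
  | succ K hK ih =>
    intro hkm π hadj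
    simp only [Nat.add_sub_cancel] at hadj
    classical
    set star : KSubsets m K → Finset (KSubsets m (K+1)) :=
      fun S => Finset.univ.filter (fun B => S.1 ⊆ B.1) with hstar
    have hstarcard : ∀ S, (star S).card = m - K := fun S =>
      card_star (by omega) S.1 S.2
    have hstar_pairwise : ∀ S, ∀ B ∈ star S, ∀ C ∈ star S, B ≠ C →
        (B.1 ∩ C.1).card = K := by
      intro S B hB C hC hne
      have hSB : S.1 ⊆ B.1 := (Finset.mem_filter.mp hB).2
      have hSC : S.1 ⊆ C.1 := (Finset.mem_filter.mp hC).2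
      have hle := inter_card_le_of_ne B C hne
      have hge := Finset.card_le_card (Finset.subset_inter hSB hSC)
      have hS2 := S.2
      omega
    have himg_adj : ∀ S, ∀ B' ∈ (star S).image π, ∀ C' ∈ (star S).image π, B' ≠ C' →
        (B'.1 ∩ C'.1).card = K := by
      intro S B' hB' C' hC' hne
      obtain ⟨B, hB, rfl⟩ := Finset.mem_image.mp hB'
      obtain ⟨C, hC, rfl⟩ := Finset.mem_image.mp hC'
      have hBC : B ≠ C := fun h => hne (by rw [h])
      exact (hadj B C).mp (hstar_pairwise S B hB C hC hBC)
    have himg_card : ∀ S, ((star S).image π).card = m - K := by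
      intro S
      rw [Finset.card_image_of_injective _ π.injective, hstarcard]
    have hex : ∀ S : KSubsets m K, ∃ T : Finset (Fin m), T.card = K ∧
        ∀ B ∈ (star S).image π, T ⊆ B.1 := by
      intro S
      apply clique_star _ (himg_adj S)
      rw [himg_card]
      omega
    choose T hTcard hTsub using hex
    set π' : KSubsets m K → KSubsets m K := fun S => ⟨T S, hTcard S⟩ with hπ'
    have hmap : ∀ S, (star S).image π = star (π' S) := by
      intro S
      apply Finset.eq_of_subset_of_card_le
      · intro B' hB'
        simp only [hstar, Finset.mem_filter]
        exact ⟨Finset.mem_univ _, hTsub S B' hB'⟩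
      · rw [himg_card, hstarcard]
    have hcont : ∀ (S : KSubsets m K) (B : KSubsets m (K+1)),
        S.1 ⊆ B.1 ↔ (π' S).1 ⊆ (π B).1 := by
      intro S B
      constructor
      · intro h
        exact hTsub S (π B) (Finset.mem_image_of_mem π (by
          simp only [hstar, Finset.mem_filter]
          exact ⟨Finset.mem_univ _, h⟩))
      · intro h
        have hmem : π B ∈ star (π' S) := by
          simp only [hstar, Finset.mem_filter]
          exact ⟨Finset.mem_univ _, h⟩
        rw [← hmap] at hmem
        obtain ⟨B0, hB0, hB0e⟩ := Finset.mem_image.mp hmem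
        have hBB : B0 = B := π.injective hB0e
        subst hBB
        exact (Finset.mem_filter.mp hB0).2
    have hπ'inj : Function.Injective π' := by
      intro S1 S2 h
      have h1 : (star S1).image π = (star S2).image π := by rw [hmap, hmap, h]
      have h2 : star S1 = star S2 := Finset.image_injective π.injective h1
      have hcard2 : 1 < (star S1).card := by rw [hstarcard]; omega
      obtain ⟨B1, hB1, B2, hB2, h12⟩ := Finset.one_lt_card.mp hcard2
      have key : ∀ S0 : KSubsets m K, B1 ∈ star S0 → B2 ∈ star S0 →
          S0.1 = B1.1 ∩ B2.1 := by
        intro S0 hB1' hB2'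
        apply Finset.eq_of_subset_of_card_le
        · exact Finset.subset_inter (Finset.mem_filter.mp hB1').2
            (Finset.mem_filter.mp hB2').2
        · have h5 := inter_card_le_of_ne B1 B2 h12
          rw [S0.2]
          omega
      have e1 := key S1 hB1 hB2
      have e2 := key S2 (h2 ▸ hB1) (h2 ▸ hB2)
      exact Subtype.ext (e1.trans e2.symm)
    set π'' : Equiv.Perm (KSubsets m K) :=
      Equiv.ofBijective π' (Finite.injective_iff_bijective.mp hπ'inj) with hπ''
    have char : ∀ S1 S2 : KSubsets m K, (S1.1 ∩ S2.1).card = K - 1 ↔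
        (S1 ≠ S2 ∧ ∃ B : KSubsets m (K+1), S1.1 ⊆ B.1 ∧ S2.1 ⊆ B.1) := by
      intro S1 S2
      constructor
      · intro h
        have hne : S1 ≠ S2 := by
          rintro rfl
          rw [Finset.inter_self, S1.2] at h
          omega
        refine ⟨hne, ⟨⟨S1.1 ∪ S2.1, ?_⟩, Finset.subset_union_left,
          Finset.subset_union_right⟩⟩
        have h5 := Finset.card_union_add_card_inter S1.1 S2.1
        rw [S1.2, S2.2, h] at h5
        omega
      · rintro ⟨hne, B, h1, h2⟩
        have hle : (S1.1 ∩ S2.1).card ≤ K - 1 := inter_card_le_of_ne S1 S2 hne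
        have h5 := Finset.card_union_add_card_inter S1.1 S2.1
        have h6 : (S1.1 ∪ S2.1).card ≤ K + 1 := by
          rw [← B.2]
          exact Finset.card_le_card (Finset.union_subset h1 h2)
        rw [S1.2, S2.2] at h5
        omega
    have hadj' : ∀ S1 S2 : KSubsets m K, (S1.1 ∩ S2.1).card = K - 1 ↔
        ((π'' S1).1 ∩ (π'' S2).1).card = K - 1 := by
      intro S1 S2
      rw [char S1 S2, char (π'' S1) (π'' S2)]
      constructor
      · rintro ⟨hne, B, h1, h2⟩
        exact ⟨fun h => hne (π''.injective h), π B, (hcont S1 B).mp h1,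
          (hcont S2 B).mp h2⟩
      · rintro ⟨hne, B', h1, h2⟩
        obtain ⟨B, rfl⟩ := π.surjective B'
        exact ⟨fun h => hne (by rw [h]), B, (hcont S1 B).mpr h1, (hcont S2 B).mpr h2⟩
    obtain ⟨σ, hσ⟩ := ih (by omega) π'' hadj'
    refine ⟨σ, fun B => ?_⟩
    have hsub : B.1.image σ ⊆ (π B).1 := by
      intro y hy
      obtain ⟨x, hx, rfl⟩ := Finset.mem_image.mp hy
      obtain ⟨z, hz, hzx⟩ := Finset.exists_mem_ne (by rw [B.2]; omega) x
      set S : KSubsets m K := ⟨B.1.erase z, by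
        rw [Finset.card_erase_of_mem hz, B.2]; omega⟩ with hSdef
      have hxS : x ∈ S.1 := Finset.mem_erase.mpr ⟨fun h => hzx h.symm, hx⟩
      have hScont : (π' S).1 ⊆ (π B).1 := (hcont S B).mp (Finset.erase_subset z B.1)
      have hσS : (π' S).1 = S.1.image σ := hσ S
      apply hScont
      rw [hσS]
      exact Finset.mem_image_of_mem σ hxS
    apply (Finset.eq_of_subset_of_card_le hsub ?_).symm
    rw [Finset.card_image_of_injective _ σ.injective, B.2, (π B).2]

end JohnsonMain
/-- For `m ≥ 5`, `1 ≤ k`, `2k < m`, the normalizer of `A_m^{(k)}` in the full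
symmetric group on `k`-subsets is `S_m^{(k)}`. -/
theorem normalizer_AmK_eq_SmK (m k : ℕ) (hm : 5 ≤ m) (hk : 1 ≤ k) (hkm : 2 * k < m) :
    Subgroup.normalizer
        (Subgroup.map (ksubsetsHom m k) (alternatingGroup (Fin m)))
      = Subgroup.map (ksubsetsHom m k) ⊤ := by
  apply le_antisymm
  · -- normalizer ≤ S_m^{(k)}
    intro π hπ
    have hadj : ∀ B C : KSubsets m k, (B.1 ∩ C.1).card = k - 1 ↔
        ((π B).1 ∩ (π C).1).card = k - 1 := by
      have hπ' : π⁻¹ ∈ Subgroup.normalizer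
          (Subgroup.map (ksubsetsHom m k) (alternatingGroup (Fin m))) :=
        (Subgroup.normalizer _).inv_mem hπ
      rcases eq_or_lt_of_le hk with h1 | hk2
      · -- k = 1
        intro B C
        constructor
        · intro h
          have hne : B ≠ C := by
            rintro rfl
            rw [Finset.inter_self, B.2] at h
            omega
          have hne2 : π B ≠ π C := fun h2 => hne (π.injective h2)
          have h5 := inter_card_le_of_ne (π B) (π C) hne2
          omega
        · intro h
          have hne2 : π B ≠ π C := by
            rintro he
            rw [he, Finset.inter_self, (π C).2] at h
            omega
          have hne : B ≠ C := fun h2 => hne2 (by rw [h2])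
          have h5 := inter_card_le_of_ne B C hne
          omega
      · -- k ≥ 2
        intro B C
        constructor
        · exact adj_preserved hm hk2 hkm π hπ B C
        · intro h
          have h5 := adj_preserved hm hk2 hkm π⁻¹ hπ' (π B) (π C) h
          simp only [Equiv.Perm.inv_apply_self] at h5
          exact h5
    obtain ⟨σ, hσ⟩ := johnson_aut k hk hkm π hadj
    refine Subgroup.mem_map.mpr ⟨σ, Subgroup.mem_top σ, ?_⟩
    apply Equiv.ext
    intro B
    apply Subtype.ext
    rw [ksubsetsHom_coe]
    exact (hσ B).symm
  · -- S_m^{(k)} ≤ normalizer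
    rintro x hx
    obtain ⟨σ, -, rfl⟩ := Subgroup.mem_map.mp hx
    rw [Subgroup.mem_normalizer_iff]
    intro h
    constructor
    · rintro ⟨g, hg, rfl⟩
      refine ⟨σ * g * σ⁻¹, ?_, by rw [map_mul, map_mul, map_inv]⟩
      simp only [SetLike.mem_coe] at hg ⊢
      rw [Equiv.Perm.mem_alternatingGroup] at hg ⊢
      simp [Equiv.Perm.sign_mul, hg, mul_comm]
    · rintro ⟨g, hg, hge⟩
      have he : h = ksubsetsHom m k (σ⁻¹ * g * σ) := by
        rw [map_mul, map_mul, hge]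
        rw [map_inv]
        group
      rw [he]
      refine ⟨σ⁻¹ * g * σ, ?_, rfl⟩
      simp only [SetLike.mem_coe] at hg ⊢
      rw [Equiv.Perm.mem_alternatingGroup] at hg ⊢
      simp [Equiv.Perm.sign_mul, hg, mul_comm]
end

section
/- Let m ≥ 5 and k ≥ 1 with 2k < m, and let H be a nontrivial subgroup of Sym(Ω_{m,k}) whose normalizer N in Sym(Ω_{m,k}) satisfies A_m^{(k)} ≤ N ≤ S_m^{(k)}. Then A_m^{(k)} ≤ H and soc(H) = A_m^{(k)}. -/
open Pointwise

section AltSimpleAux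

open Equiv Equiv.Perm Subgroup

set_option linter.unusedSectionVars false

namespace AmKAux

variable {α : Type} [Fintype α] [DecidableEq α]

lemma exists_not_mem (s : Finset α) (h : s.card < Fintype.card α) : ∃ c, c ∉ s := by
  have : sᶜ.Nonempty := by
    rw [← Finset.card_pos, Finset.card_compl]
    omega
  obtain ⟨c, hc⟩ := this
  exact ⟨c, Finset.mem_compl.mp hc⟩

/-- the 3-cycle `b → c → d → b`. -/
def tc (b c d : α) : Perm α := Equiv.swap b c * Equiv.swap c d

lemma tc_b {b c d : α} (hbc : b ≠ c) (hbd : b ≠ d) : tc b c d b = c := by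
  simp [tc, Equiv.Perm.mul_apply, Equiv.swap_apply_of_ne_of_ne hbc hbd]

lemma tc_c {b c d : α} (hbd : b ≠ d) (hcd : c ≠ d) : tc b c d c = d := by
  simp [tc, Equiv.Perm.mul_apply, Equiv.swap_apply_of_ne_of_ne hbd.symm hcd.symm,
    Equiv.swap_apply_of_ne_of_ne]

lemma tc_fix {b c d x : α} (h1 : x ≠ b) (h2 : x ≠ c) (h3 : x ≠ d) : tc b c d x = x := by
  simp [tc, Equiv.Perm.mul_apply, Equiv.swap_apply_of_ne_of_ne h2 h3,
    Equiv.swap_apply_of_ne_of_ne h1 h2]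

lemma tc_mem_alt {b c d : α} (hbc : b ≠ c) (hcd : c ≠ d) :
    tc b c d ∈ alternatingGroup α := by
  simp [Equiv.Perm.mem_alternatingGroup, tc, Equiv.Perm.sign_swap hbc, Equiv.Perm.sign_swap hcd]

end AmKAux

namespace AmKAux

set_option linter.unusedSectionVars false

variable {α : Type} [Fintype α] [DecidableEq α]

/-- Relative simplicity of the alternating group, phrased for subgroups of `Perm α`. -/
def AltDich (α : Type) [Fintype α] [DecidableEq α] : Prop :=
  ∀ N : Subgroup (Perm α), N ≤ alternatingGroup α →
    (∀ g ∈ alternatingGroup α, ∀ x ∈ N, g * x * g⁻¹ ∈ N) →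
    N = ⊥ ∨ N = alternatingGroup α

lemma altDich_of_simple (h : IsSimpleGroup (alternatingGroup α)) : AltDich α := by
  intro N hle hconj
  have hnorm : (N.subgroupOf (alternatingGroup α)).Normal := by
    constructor
    intro x hx g
    rw [Subgroup.mem_subgroupOf] at hx ⊢
    simpa using hconj g.1 g.2 x.1 hx
  rcases hnorm.eq_bot_or_eq_top with h1 | h1
  · left
    rw [Subgroup.subgroupOf_eq_bot] at h1
    exact (Disjoint.eq_bot_of_le h1 hle)
  · right
    rw [Subgroup.subgroupOf_eq_top] at h1
    exact le_antisymm hle h1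

/-- `permCongr` as a multiplicative equivalence. -/
def permCongrMul {β : Type} (e : α ≃ β) : Perm α ≃* Perm β :=
  { Equiv.permCongr e with
    map_mul' := fun p q => by
      ext x
      simp [Equiv.permCongr_apply, Equiv.Perm.mul_apply] }

lemma permCongrMul_sign {β : Type} [Fintype β] [DecidableEq β] (e : α ≃ β) (p : Perm α) :
    sign (permCongrMul e p) = sign p :=
  Equiv.Perm.sign_permCongr e p

lemma permCongrMul_map_alt {β : Type} [Fintype β] [DecidableEq β] (e : α ≃ β) :
    Subgroup.map (permCongrMul e).toMonoidHom (alternatingGroup α) = alternatingGroup β := by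
  ext x
  constructor
  · rintro ⟨p, hp, rfl⟩
    have hp' : sign p = 1 := hp
    show permCongrMul e p ∈ alternatingGroup β
    rw [Equiv.Perm.mem_alternatingGroup, permCongrMul_sign]
    exact hp'
  · intro hx
    have hx' : sign x = 1 := hx
    refine ⟨(permCongrMul e).symm x, ?_, by simp⟩
    show (permCongrMul e).symm x ∈ alternatingGroup α
    rw [Equiv.Perm.mem_alternatingGroup, ← permCongrMul_sign e ((permCongrMul e).symm x)]
    simpa using hx'

lemma altDich_congr {β : Type} [Fintype β] [DecidableEq β] (e : α ≃ β) (hβ : AltDich β) :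
    AltDich α := by
  intro N hle hconj
  set F := permCongrMul e with hF
  have hinj : Function.Injective F.toMonoidHom := F.injective
  have h1 : Subgroup.map F.toMonoidHom N ≤ alternatingGroup β := by
    rintro x ⟨p, hp, rfl⟩
    show permCongrMul e p ∈ alternatingGroup β
    rw [Equiv.Perm.mem_alternatingGroup, permCongrMul_sign]
    exact hle hp
  have h2 : ∀ g ∈ alternatingGroup β, ∀ x ∈ Subgroup.map F.toMonoidHom N,
      g * x * g⁻¹ ∈ Subgroup.map F.toMonoidHom N := by
    rintro g hg x ⟨p, hp, rfl⟩
    refine ⟨F.symm g * p * (F.symm g)⁻¹, hconj _ ?_ p hp, by simp [mul_assoc]⟩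
    rw [Equiv.Perm.mem_alternatingGroup]
    rw [← permCongrMul_sign e (F.symm g)]
    simpa [hF] using (Equiv.Perm.mem_alternatingGroup.mp hg)
  rcases hβ _ h1 h2 with h | h
  · left
    exact Subgroup.map_injective hinj (by simpa using h)
  · right
    refine Subgroup.map_injective hinj ?_
    rw [h, permCongrMul_map_alt]

lemma altDich_five (h5 : Fintype.card α = 5) : AltDich α :=
  altDich_congr (Fintype.equivFinOfCardEq h5) (altDich_of_simple inferInstance)

lemma card_pair_le (a b : α) : ({a, b} : Finset α).card ≤ 2 := by
  apply (Finset.card_insert_le _ _).trans; simp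

lemma card_triple_le (a b c : α) : ({a, b, c} : Finset α).card ≤ 3 := by
  apply (Finset.card_insert_le _ _).trans
  have := card_pair_le b c; omega

lemma card_quad_le (a b c d : α) : ({a, b, c, d} : Finset α).card ≤ 4 := by
  apply (Finset.card_insert_le _ _).trans
  have := card_triple_le b c d; omega

lemma exists_fixed_point (h5 : 5 ≤ Fintype.card α) (N : Subgroup (Perm α))
    (hconj : ∀ g ∈ alternatingGroup α, ∀ x ∈ N, g * x * g⁻¹ ∈ N) (hbot : N ≠ ⊥) :
    ∃ σ ∈ N, σ ≠ 1 ∧ ∃ p, σ p = p := by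
  have hex : ∃ σ ∈ N, σ ≠ 1 := by
    by_contra h
    push_neg at h
    exact hbot (Subgroup.eq_bot_iff_forall N |>.mpr h)
  obtain ⟨σ, hσN, hσ1⟩ := hex
  by_cases hfix : ∃ p, σ p = p
  · exact ⟨σ, hσN, hσ1, hfix⟩
  push_neg at hfix
  by_cases h2 : ∀ x, σ (σ x) = x
  · -- fixed-point-free involution
    obtain ⟨a, -⟩ : ∃ x : α, True := by
      have : Nonempty α := Fintype.card_pos_iff.mp (by omega)
      exact ⟨this.some, trivial⟩
    set b := σ a with hb
    have hba : b ≠ a := hfix a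
    obtain ⟨c, hc⟩ := exists_not_mem {a, b} (lt_of_le_of_lt (card_pair_le a b) (by omega))
    simp only [Finset.mem_insert, Finset.mem_singleton, not_or] at hc
    obtain ⟨hca, hcb⟩ := hc
    set d := σ c with hd
    have hdc : d ≠ c := hfix c
    have hda : d ≠ a := by
      intro h
      have h2c := h2 c
      rw [← hd, h, ← hb] at h2c
      exact hcb h2c.symm
    have hdb : d ≠ b := fun h => hca (σ.injective ((hd.symm.trans h).trans hb))
    obtain ⟨e, he⟩ := exists_not_mem {a, b, c, d}
      (lt_of_le_of_lt (card_quad_le a b c d) (by omega))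
    simp only [Finset.mem_insert, Finset.mem_singleton, not_or] at he
    obtain ⟨hea, heb, hec, hed⟩ := he
    set τ := tc c d e with hτ
    have hτalt : τ ∈ alternatingGroup α := tc_mem_alt (Ne.symm hdc) (fun h => hed h.symm)
    set σ₂ := τ * σ * τ⁻¹ with hσ₂
    have hσ₂N : σ₂ ∈ N := hconj τ hτalt σ hσN
    have hτa : τ a = a := tc_fix (Ne.symm hca) (Ne.symm hda) (Ne.symm hea)
    have hτb : τ b = b := tc_fix (Ne.symm hcb) (Ne.symm hdb) (Ne.symm heb)
    have hτinva : τ⁻¹ a = a := Equiv.Perm.inv_eq_iff_eq.mpr hτa.symm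
    have hσ₂a : σ₂ a = b := by
      rw [hσ₂]
      simp only [Equiv.Perm.mul_apply]
      rw [hτinva, ← hb, hτb]
    have hσ₂d : σ₂ d = e := by
      have hτc : τ c = d := tc_b (Ne.symm hdc) (fun h => hec h.symm)
      have hτinvd : τ⁻¹ d = c := Equiv.Perm.inv_eq_iff_eq.mpr hτc.symm
      rw [hσ₂]
      simp only [Equiv.Perm.mul_apply]
      rw [hτinvd, ← hd]
      exact tc_c (fun h => hec h.symm) (fun h => hed h.symm)
    refine ⟨σ₂⁻¹ * σ, mul_mem (inv_mem hσ₂N) hσN, ?_, a, ?_⟩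
    · intro h
      have hσσ₂ : σ = σ₂ := by
        have := congrArg (σ₂ * ·) h
        simpa [mul_assoc] using this
      have hσd : σ d = c := by rw [hd, h2 c]
      rw [hσσ₂, hσ₂d] at hσd
      exact hec hσd
    · have : σ₂⁻¹ b = a := Equiv.Perm.inv_eq_iff_eq.mpr hσ₂a.symm
      rw [Equiv.Perm.mul_apply, ← hb, this]
  · -- some cycle of length ≥ 3
    push_neg at h2
    obtain ⟨a, ha⟩ := h2
    set b := σ a with hb
    set c := σ b with hc
    have hba : b ≠ a := hfix a
    have hcb : c ≠ b := hfix b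
    have hca : c ≠ a := by rw [hc, hb]; exact ha
    obtain ⟨d, hdmem⟩ := exists_not_mem {a, b, c}
      (lt_of_le_of_lt (card_triple_le a b c) (by omega))
    simp only [Finset.mem_insert, Finset.mem_singleton, not_or] at hdmem
    obtain ⟨hda, hdb, hdc⟩ := hdmem
    obtain ⟨e, he⟩ := exists_not_mem {a, b, c, d}
      (lt_of_le_of_lt (card_quad_le a b c d) (by omega))
    simp only [Finset.mem_insert, Finset.mem_singleton, not_or] at he
    obtain ⟨hea, heb, hec, hed⟩ := he
    set τ := tc c d e with hτ
    have hτalt : τ ∈ alternatingGroup α := tc_mem_alt (Ne.symm hdc) (fun h => hed h.symm)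
    set σ₂ := τ * σ * τ⁻¹ with hσ₂
    have hσ₂N : σ₂ ∈ N := hconj τ hτalt σ hσN
    have hτa : τ a = a := tc_fix (Ne.symm hca) (Ne.symm hda) (Ne.symm hea)
    have hτb : τ b = b := tc_fix (Ne.symm hcb) (Ne.symm hdb) (Ne.symm heb)
    have hτinva : τ⁻¹ a = a := Equiv.Perm.inv_eq_iff_eq.mpr hτa.symm
    have hτinvb : τ⁻¹ b = b := Equiv.Perm.inv_eq_iff_eq.mpr hτb.symm
    have hσ₂a : σ₂ a = b := by
      rw [hσ₂]
      simp only [Equiv.Perm.mul_apply]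
      rw [hτinva, ← hb, hτb]
    have hσ₂b : σ₂ b = d := by
      rw [hσ₂]
      simp only [Equiv.Perm.mul_apply]
      rw [hτinvb, ← hc]
      exact tc_b (Ne.symm hdc) (fun h => hec h.symm)
    refine ⟨σ₂⁻¹ * σ, mul_mem (inv_mem hσ₂N) hσN, ?_, a, ?_⟩
    · intro h
      have hσσ₂ : σ = σ₂ := by
        have := congrArg (σ₂ * ·) h
        simpa [mul_assoc] using this
      have hσb : σ b = c := hc.symm
      rw [hσσ₂, hσ₂b] at hσb
      exact hdc hσb
    · have : σ₂⁻¹ b = a := Equiv.Perm.inv_eq_iff_eq.mpr hσ₂a.symm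
      rw [Equiv.Perm.mul_apply, ← hb, this]

lemma altDich_of_card : ∀ n : ℕ, 5 ≤ n → ∀ (α : Type) [Fintype α] [DecidableEq α],
    Fintype.card α = n → AltDich α := by
  intro n hn
  induction n, hn using Nat.le_induction with
  | base => exact fun α _ _ h => altDich_five h
  | succ n hn ih =>
    intro α _ _ hcard
    intro N hle hconj
    by_cases hbot : N = ⊥
    · exact Or.inl hbot
    right
    have h5 : 5 ≤ Fintype.card α := by omega
    obtain ⟨σ, hσN, hσ1, p, hp⟩ := exists_fixed_point h5 N hconj hbot
    -- restrict to the complement of p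
    set q : α → Prop := fun x => ¬ (x = p) with hq
    have hσq : ∀ x, q (σ x) ↔ q x := by
      intro x
      simp only [hq]
      constructor
      · intro hx h
        exact hx (by rw [h, hp])
      · intro hx h
        exact hx (σ.injective (h.trans hp.symm))
    have hofτ : ofSubtype (σ.subtypePerm hσq) = σ :=
      ofSubtype_subtypePerm hσq (fun x hx h => hx (by rw [h, hp]))
    have hcardq : Fintype.card (Subtype q) = n := by
      have h1 : Fintype.card (Subtype q) = Fintype.card α - Fintype.card {x // x = p} :=
        Fintype.card_subtype_compl _
      rw [Fintype.card_subtype_eq] at h1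
      omega
    set N₀ : Subgroup (Perm (Subtype q)) := N.comap (ofSubtype : Perm (Subtype q) →* Perm α)
      with hN₀
    have hN₀le : N₀ ≤ alternatingGroup (Subtype q) := by
      intro x hx
      rw [Equiv.Perm.mem_alternatingGroup, ← Equiv.Perm.sign_ofSubtype]
      exact hle hx
    have hN₀conj : ∀ g ∈ alternatingGroup (Subtype q), ∀ x ∈ N₀, g * x * g⁻¹ ∈ N₀ := by
      intro g hg x hx
      have hgalt : ofSubtype g ∈ alternatingGroup α := by
        rw [Equiv.Perm.mem_alternatingGroup, Equiv.Perm.sign_ofSubtype]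
        exact hg
      have : ofSubtype (g * x * g⁻¹) = ofSubtype g * ofSubtype x * (ofSubtype g)⁻¹ := by
        simp [map_mul]
      rw [Subgroup.mem_comap, this]
      exact hconj _ hgalt _ hx
    have hN₀bot : N₀ ≠ ⊥ := by
      intro hb
      have hτmem : σ.subtypePerm hσq ∈ N₀ := by
        rw [Subgroup.mem_comap, hofτ]; exact hσN
      rw [hb, Subgroup.mem_bot] at hτmem
      apply hσ1
      rw [← hofτ, hτmem, map_one]
    rcases ih (Subtype q) hcardq N₀ hN₀le hN₀conj with h | h
    · exact absurd h hN₀bot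
    -- N₀ is the full alternating group on the complement; extract a 3-cycle in N
    have hcard3 : 3 ≤ Fintype.card (Subtype q) := by omega
    obtain ⟨u, -⟩ : ∃ x : Subtype q, True := by
      have : Nonempty (Subtype q) := Fintype.card_pos_iff.mp (by omega)
      exact ⟨this.some, trivial⟩
    obtain ⟨v, hv⟩ := exists_not_mem ({u} : Finset (Subtype q))
      (by simp; omega)
    obtain ⟨w, hw⟩ := exists_not_mem ({u, v} : Finset (Subtype q))
      (lt_of_le_of_lt (card_pair_le u v) (by omega))
    simp only [Finset.mem_singleton] at hv
    simp only [Finset.mem_insert, Finset.mem_singleton, not_or] at hw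
    obtain ⟨hwu, hwv⟩ := hw
    have huv : u ≠ v := Ne.symm hv
    have huw : u ≠ w := Ne.symm hwu
    have hvw : v ≠ w := Ne.symm hwv
    have hsmem : Equiv.swap u v * Equiv.swap u w ∈ N₀ := by
      rw [h, Equiv.Perm.mem_alternatingGroup, map_mul, Equiv.Perm.sign_swap huv,
        Equiv.Perm.sign_swap huw]
      norm_num
    have hgN : ofSubtype (Equiv.swap u v * Equiv.swap u w) ∈ N := hsmem
    have hgeq : ofSubtype (Equiv.swap u v * Equiv.swap u w)
        = Equiv.swap (u : α) (v : α) * Equiv.swap (u : α) (w : α) := by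
      rw [map_mul, Equiv.Perm.ofSubtype_swap_eq, Equiv.Perm.ofSubtype_swap_eq]
    have huv' : (u : α) ≠ v := Subtype.coe_injective.ne huv
    have huw' : (u : α) ≠ w := Subtype.coe_injective.ne huw
    have hvw' : (v : α) ≠ w := Subtype.coe_injective.ne hvw
    have h3 : IsThreeCycle (Equiv.swap (u : α) (v : α) * Equiv.swap (u : α) (w : α)) :=
      isThreeCycle_swap_mul_swap_same huv' huw' hvw'
    rw [hgeq] at hgN
    -- conclude via the normal closure of a 3-cycle
    have hnorm : (N.subgroupOf (alternatingGroup α)).Normal := by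
      constructor
      intro x hx g
      rw [Subgroup.mem_subgroupOf] at hx ⊢
      simpa using hconj g.1 g.2 x.1 hx
    have hmem : (⟨_, h3.mem_alternatingGroup⟩ : alternatingGroup α)
        ∈ N.subgroupOf (alternatingGroup α) := by
      rw [Subgroup.mem_subgroupOf]
      exact hgN
    have htop : N.subgroupOf (alternatingGroup α) = ⊤ := by
      have := Subgroup.normalClosure_le_normal (N := N.subgroupOf (alternatingGroup α))
        (s := {(⟨_, h3.mem_alternatingGroup⟩ : alternatingGroup α)})
        (by simpa using hmem)
      rw [h3.alternating_normalClosure (by rw [Nat.card_eq_fintype_card]; exact h5)] at this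
      exact le_antisymm le_top this
    rw [Subgroup.subgroupOf_eq_top] at htop
    exact le_antisymm hle htop

end AmKAux

end AltSimpleAux

namespace AmKAux

open Equiv Equiv.Perm Subgroup

variable {m k : ℕ}

lemma smul_val (g : Equiv.Perm (Fin m)) (A : KSubsets m k) : (g • A).1 = g • A.1 := rfl

lemma phi_apply (g : Equiv.Perm (Fin m)) (A : KSubsets m k) : ksubsetsHom m k g A = g • A := rfl

lemma phi_injective (hk : 1 ≤ k) (hkm : 2 * k < m) :
    Function.Injective (ksubsetsHom m k) := by
  refine (injective_iff_map_eq_one _).mpr ?_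
  intro g hg
  by_contra hg1
  obtain ⟨a, ha⟩ : ∃ a, g a ≠ a := by
    by_contra h
    push_neg at h
    exact hg1 (Equiv.ext h)
  have hbound : k - 1 ≤ ((Finset.univ : Finset (Fin m)) \ {a, g a}).card := by
    rw [Finset.card_sdiff_of_subset (Finset.subset_univ _), Finset.card_univ, Fintype.card_fin,
      Finset.card_pair (Ne.symm ha)]
    omega
  obtain ⟨t, hts, htc⟩ := Finset.exists_subset_card_eq hbound
  have hat : a ∉ t := by
    intro h
    have := hts h
    simp [Finset.mem_sdiff] at this
  have hgat : g a ∉ t := by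
    intro h
    have := hts h
    simp [Finset.mem_sdiff] at this
  set A : Finset (Fin m) := insert a t with hA
  have hAcard : A.card = k := by
    rw [hA, Finset.card_insert_of_notMem hat, htc]
    omega
  have heq : g • (⟨A, hAcard⟩ : KSubsets m k) = ⟨A, hAcard⟩ := by
    have := congrFun (congrArg (fun (p : Equiv.Perm (KSubsets m k)) => (p : KSubsets m k → KSubsets m k)) hg) ⟨A, hAcard⟩
    simpa [phi_apply] using this
  have hval : g • A = A := congrArg Subtype.val heq
  have hmem : g a ∈ g • A := by
    have : a ∈ A := Finset.mem_insert_self a t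
    simpa [Equiv.Perm.smul_def] using Finset.smul_mem_smul_finset (a := g) this
  rw [hval] at hmem
  rcases Finset.mem_insert.mp hmem with h | h
  · exact ha h
  · exact hgat h

lemma centralizer_trivial (hm : 5 ≤ m) (hk : 1 ≤ k) (hkm : 2 * k < m)
    (σ : Equiv.Perm (KSubsets m k))
    (hσ : ∀ g ∈ alternatingGroup (Fin m),
      σ * ksubsetsHom m k g = ksubsetsHom m k g * σ) : σ = 1 := by
  apply Equiv.ext
  intro A
  rw [Equiv.Perm.one_apply]
  by_contra hBA
  set B := σ A with hB
  have hne : B.1 ≠ A.1 := fun h => hBA (Subtype.ext h)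
  have hBdiff : (B.1 \ A.1).Nonempty := by
    rw [Finset.sdiff_nonempty]
    intro hsub
    exact hne (Finset.eq_of_subset_of_card_le hsub (by rw [A.2, B.2]))
  obtain ⟨b, hbmem⟩ := hBdiff
  rw [Finset.mem_sdiff] at hbmem
  obtain ⟨hbB, hbA⟩ := hbmem
  obtain ⟨c, hc⟩ := exists_not_mem (A.1 ∪ B.1) (by
    have := Finset.card_union_le A.1 B.1
    rw [A.2, B.2] at this
    have hcm : Fintype.card (Fin m) = m := Fintype.card_fin m
    omega)
  rw [Finset.mem_union, not_or] at hc
  obtain ⟨hcA, hcB⟩ := hc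
  obtain ⟨d, hd⟩ := exists_not_mem (A.1 ∪ {b, c}) (by
    have h1 := Finset.card_union_le A.1 ({b, c} : Finset (Fin m))
    have h2 := card_pair_le b c
    rw [A.2] at h1
    have hcm : Fintype.card (Fin m) = m := Fintype.card_fin m
    omega)
  rw [Finset.mem_union, not_or, Finset.mem_insert, Finset.mem_singleton, not_or] at hd
  obtain ⟨hdA, hdb, hdc⟩ := hd
  have hbc : b ≠ c := fun h => hcB (h ▸ hbB)
  have hcd : c ≠ d := Ne.symm hdc
  have hbd : b ≠ d := Ne.symm hdb
  set τ := tc b c d with hτ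
  have hτalt : τ ∈ alternatingGroup (Fin m) := tc_mem_alt hbc hcd
  have hτA : τ • A = A := by
    apply Subtype.ext
    rw [smul_val]
    ext x
    rw [Finset.mem_smul_finset]
    constructor
    · rintro ⟨y, hy, rfl⟩
      have : τ • y = y := by
        rw [Equiv.Perm.smul_def]
        exact tc_fix (fun h => hbA (h ▸ hy)) (fun h => hcA (h ▸ hy)) (fun h => hdA (h ▸ hy))
      rw [this]
      exact hy
    · intro hx
      exact ⟨x, hx, by
        rw [Equiv.Perm.smul_def]
        exact tc_fix (fun h => hbA (h ▸ hx)) (fun h => hcA (h ▸ hx)) (fun h => hdA (h ▸ hx))⟩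
  have hcomm := congrFun (congrArg (fun (p : Equiv.Perm (KSubsets m k)) =>
    (p : KSubsets m k → KSubsets m k)) (hσ τ hτalt)) A
  simp only [Equiv.Perm.coe_mul, Function.comp_apply] at hcomm
  -- hcomm : σ (φ τ A) = φ τ (σ A)
  rw [phi_apply, phi_apply, hτA] at hcomm
  have hBτB : B = τ • B := hcomm
  have hcmem : c ∈ (τ • B).1 := by
    rw [smul_val, Finset.mem_smul_finset]
    exact ⟨b, hbB, by rw [Equiv.Perm.smul_def]; exact tc_b hbc hbd⟩
  rw [← hBτB] at hcmem
  exact hcB hcmem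

lemma dich_image {G : Type*} [Group G] (hm : 5 ≤ m) (φ : Equiv.Perm (Fin m) →* G)
    (hinj : Function.Injective φ) (K : Subgroup G)
    (hle : K ≤ Subgroup.map φ (alternatingGroup (Fin m)))
    (hconj : ∀ a ∈ Subgroup.map φ (alternatingGroup (Fin m)), ∀ x ∈ K, a * x * a⁻¹ ∈ K) :
    K = ⊥ ∨ K = Subgroup.map φ (alternatingGroup (Fin m)) := by
  have hd : AltDich (Fin m) := altDich_of_card m hm (Fin m) (by simp)
  set K₀ : Subgroup (Equiv.Perm (Fin m)) := K.comap φ ⊓ alternatingGroup (Fin m) with hK₀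
  have hmap : Subgroup.map φ K₀ = K := by
    apply le_antisymm
    · rintro x ⟨y, hy, rfl⟩
      exact hy.1
    · intro x hx
      obtain ⟨y, hy, rfl⟩ := hle hx
      exact ⟨y, ⟨hx, hy⟩, rfl⟩
  have h1 : K₀ ≤ alternatingGroup (Fin m) := inf_le_right
  have h2 : ∀ g ∈ alternatingGroup (Fin m), ∀ x ∈ K₀, g * x * g⁻¹ ∈ K₀ := by
    intro g hg x hx
    simp only [hK₀, Subgroup.mem_inf] at hx ⊢
    refine ⟨?_, mul_mem (mul_mem hg hx.2) (inv_mem hg)⟩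
    rw [Subgroup.mem_comap, map_mul, map_mul, map_inv]
    exact hconj _ ⟨g, hg, rfl⟩ _ hx.1
  rcases hd K₀ h1 h2 with h | h
  · left
    rw [← hmap, h, Subgroup.map_bot]
  · right
    rw [← hmap, h]

end AmKAux

/-- If `m ≥ 5`, `1 ≤ k`, `2k < m`, and `H` is a nontrivial subgroup of `Sym(Ω_{m,k})`
whose normalizer `N` satisfies `A_m^{(k)} ≤ N ≤ S_m^{(k)}`, then `A_m^{(k)} ≤ H`
and `soc(H) = A_m^{(k)}`. -/
theorem socle_eq_AmK_of_normalizer_large (m k : ℕ) (hm : 5 ≤ m) (hk : 1 ≤ k)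
    (hkm : 2 * k < m) (H : Subgroup (Equiv.Perm (KSubsets m k))) (hH : H ≠ ⊥)
    (hlow : Subgroup.map (ksubsetsHom m k) (alternatingGroup (Fin m)) ≤ Subgroup.normalizer (H : Set (Equiv.Perm (KSubsets m k))))
    (hhigh : Subgroup.normalizer (H : Set (Equiv.Perm (KSubsets m k))) ≤ Subgroup.map (ksubsetsHom m k) ⊤) :
    Subgroup.map (ksubsetsHom m k) (alternatingGroup (Fin m)) ≤ H ∧
      Subgroup.map H.subtype (socle ↥H)
        = Subgroup.map (ksubsetsHom m k) (alternatingGroup (Fin m)) := by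
  classical
  set φ := ksubsetsHom m k with hφ
  set A := Subgroup.map φ (alternatingGroup (Fin m)) with hA
  have hφinj : Function.Injective φ := AmKAux.phi_injective hk hkm
  have hcent : ∀ σ : Equiv.Perm (KSubsets m k),
      (∀ g ∈ alternatingGroup (Fin m), σ * φ g = φ g * σ) → σ = 1 :=
    fun σ h => AmKAux.centralizer_trivial hm hk hkm σ h
  have hdich : ∀ K : Subgroup (Equiv.Perm (KSubsets m k)), K ≤ A →
      (∀ a ∈ A, ∀ x ∈ K, a * x * a⁻¹ ∈ K) → K = ⊥ ∨ K = A :=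
    fun K h1 h2 => AmKAux.dich_image hm φ hφinj K h1 h2
  have hconjA : ∀ n ∈ Subgroup.map φ (⊤ : Subgroup (Equiv.Perm (Fin m))),
      ∀ a ∈ A, n * a * n⁻¹ ∈ A := by
    rintro n ⟨g, -, rfl⟩ a ⟨h, hh, rfl⟩
    refine ⟨g * h * g⁻¹, (alternatingGroup.normal).conj_mem h hh g, ?_⟩
    simp [map_mul]
  have hAbot : A ≠ ⊥ := by
    have hnt : Nontrivial (alternatingGroup (Fin m)) :=
      alternatingGroup.nontrivial_of_three_le_card (by rw [Nat.card_fin]; omega)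
    obtain ⟨z, hz⟩ := exists_ne (1 : alternatingGroup (Fin m))
    intro hb
    have hzA : φ z.1 ∈ A := ⟨z.1, z.2, rfl⟩
    rw [hb, Subgroup.mem_bot] at hzA
    exact hz (Subtype.ext (hφinj (by rw [hzA]; simp)))
  have hHS : ∀ h ∈ H, h ∈ Subgroup.map φ (⊤ : Subgroup (Equiv.Perm (Fin m))) :=
    fun h hh => hhigh (Subgroup.le_normalizer hh)
  -- Part 1 : A ≤ H
  have hAH : A ≤ H := by
    have hK : A ⊓ H = ⊥ ∨ A ⊓ H = A := by
      apply hdich _ inf_le_left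
      intro a ha x hx
      rw [Subgroup.mem_inf] at hx ⊢
      constructor
      · exact mul_mem (mul_mem ha hx.1) (inv_mem ha)
      · exact (Subgroup.mem_normalizer_iff.mp (hlow ha) x).mp hx.2
    rcases hK with h | h
    · exfalso
      apply hH
      rw [Subgroup.eq_bot_iff_forall]
      intro x hx
      apply hcent
      intro g hg
      have haA : φ g ∈ A := ⟨g, hg, rfl⟩
      have hcommA : x * φ g * x⁻¹ * (φ g)⁻¹ ∈ A := by
        have h1 : x * φ g * x⁻¹ ∈ A := hconjA x (hHS x hx) _ haA
        exact mul_mem h1 (inv_mem haA)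
      have hcommH : x * φ g * x⁻¹ * (φ g)⁻¹ ∈ H := by
        have h1 : φ g * x⁻¹ * (φ g)⁻¹ ∈ H :=
          (Subgroup.mem_normalizer_iff.mp (hlow haA) x⁻¹).mp (inv_mem hx)
        have h2 : x * (φ g * x⁻¹ * (φ g)⁻¹) ∈ H := mul_mem hx h1
        simpa [mul_assoc] using h2
      have : x * φ g * x⁻¹ * (φ g)⁻¹ ∈ A ⊓ H := Subgroup.mem_inf.mpr ⟨hcommA, hcommH⟩
      rw [h, Subgroup.mem_bot] at this
      have hxg : x * φ g = φ g * x := by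
        have := congrArg (· * (φ g * x)) this
        simpa [mul_assoc] using this
      exact hxg
    · exact inf_eq_left.mp h
  -- Part 2 : socle H = A
  set A' := A.subgroupOf H with hA'
  have hmapA' : Subgroup.map H.subtype A' = A := by
    rw [hA', Subgroup.subgroupOf_map_subtype, inf_eq_left.mpr hAH]
  have hA'norm : A'.Normal := by
    constructor
    intro x hx g
    rw [hA', Subgroup.mem_subgroupOf] at hx ⊢
    simpa using hconjA g.1 (hHS g.1 g.2) x.1 hx
  have hsubinj : Function.Injective H.subtype := Subtype.coe_injective
  have hA'min : IsMinimalNormal A' := by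
    refine ⟨hA'norm, ?_, ?_⟩
    · intro hb
      apply hAbot
      rw [← hmapA', hb, Subgroup.map_bot]
    · intro K hKnorm hKA'
      have hK' : Subgroup.map H.subtype K = ⊥ ∨ Subgroup.map H.subtype K = A := by
        apply hdich
        · rw [← hmapA']
          exact Subgroup.map_mono hKA'
        · rintro a ha x ⟨y, hy, rfl⟩
          have haH : a ∈ H := hAH ha
          have := hKnorm.conj_mem y hy ⟨a, haH⟩
          exact ⟨_, this, by simp⟩
      rcases hK' with h | h
      · left
        exact (Subgroup.map_eq_bot_iff_of_injective _ hsubinj).mp h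
      · right
        apply Subgroup.map_injective hsubinj
        rw [h, hmapA']
  have hle_A' : ∀ M : Subgroup ↥H, IsMinimalNormal M → M ≤ A' := by
    rintro M ⟨hMnorm, hMbot, hMmin⟩
    have hinfnorm : (M ⊓ A').Normal := by
      constructor
      intro x hx g
      rw [Subgroup.mem_inf] at hx ⊢
      exact ⟨hMnorm.conj_mem x hx.1 g, hA'norm.conj_mem x hx.2 g⟩
    rcases hMmin (M ⊓ A') hinfnorm inf_le_left with h | h
    · exfalso
      apply hMbot
      rw [Subgroup.eq_bot_iff_forall]
      intro y hy
      have hy1 : (y : Equiv.Perm (KSubsets m k)) = 1 := by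
        apply hcent
        intro g hg
        have haA : φ g ∈ A := ⟨g, hg, rfl⟩
        have haH : φ g ∈ H := hAH haA
        set c : ↥H := y * ⟨φ g, haH⟩ * y⁻¹ * (⟨φ g, haH⟩ : ↥H)⁻¹ with hc
        have hcM : c ∈ M := by
          have h1 : (⟨φ g, haH⟩ : ↥H) * y⁻¹ * (⟨φ g, haH⟩ : ↥H)⁻¹ ∈ M :=
            hMnorm.conj_mem y⁻¹ (inv_mem hy) _
          have h2 : y * ((⟨φ g, haH⟩ : ↥H) * y⁻¹ * (⟨φ g, haH⟩ : ↥H)⁻¹) ∈ M := mul_mem hy h1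
          simpa [hc, mul_assoc] using h2
        have hcA' : c ∈ A' := by
          rw [hA', Subgroup.mem_subgroupOf]
          have h1 : (y : Equiv.Perm (KSubsets m k)) * φ g * (y : Equiv.Perm (KSubsets m k))⁻¹ ∈ A :=
            hconjA _ (hHS _ y.2) _ haA
          have h2 : (c : Equiv.Perm (KSubsets m k))
              = (y : Equiv.Perm (KSubsets m k)) * φ g * (y : Equiv.Perm (KSubsets m k))⁻¹ * (φ g)⁻¹ := by
            simp [hc, mul_assoc]
          rw [h2]
          exact mul_mem h1 (inv_mem haA)
        have : c ∈ M ⊓ A' := Subgroup.mem_inf.mpr ⟨hcM, hcA'⟩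
        rw [h, Subgroup.mem_bot] at this
        have hc1 : (c : Equiv.Perm (KSubsets m k)) = 1 := by rw [this]; rfl
        have h2 : (c : Equiv.Perm (KSubsets m k))
            = (y : Equiv.Perm (KSubsets m k)) * φ g * (y : Equiv.Perm (KSubsets m k))⁻¹ * (φ g)⁻¹ := by
          simp [hc, mul_assoc]
        rw [h2] at hc1
        have := congrArg (· * (φ g * (y : Equiv.Perm (KSubsets m k)))) hc1
        simpa [mul_assoc] using this
      exact Subtype.ext hy1
    · exact le_of_eq_of_le h.symm (le_trans (le_of_eq rfl) inf_le_right) |>.trans le_rfl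
      |>.trans le_rfl
  have hsocle : socle ↥H = A' := by
    apply le_antisymm
    · exact sSup_le fun M hM => hle_A' M hM
    · exact le_sSup hA'min
  exact ⟨hAH, by rw [hsocle, hmapA']⟩
end
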